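/- arXiv:2012.09993 — 5 statements merged into one kernel-verified Lean document; each statement's English description precedes it below -/
import Mathlib

section
/- Let x and y be nonzero elements of the Hahn series field F = HahnSeries ℝ ℝ. Then x.order = y.order and leadingCoeff x = leadingCoeff y if and only if 0 < orderTop (x / y - 1), i.e. if and only if x / y lies in 1 + M. (Thus the quotient RV = F^× / (1 + M) is identified with the group of leading terms.) -/
open HahnSeries

theorem stmt_0 (x y : HahnSeries ℝ ℝ) (hx : x ≠ 0) (hy : y ≠ 0) :
    (x.order = y.order ∧ x.leadingCoeff = y.leadingCoeff) ↔
      0 < (x / y - 1).orderTop := by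
  rcases eq_or_ne x y with rfl | h
  · simp [div_self hy]
  have hxy : x - y ≠ 0 := sub_ne_zero.mpr h
  have hyi : (y : HahnSeries ℝ ℝ)⁻¹ ≠ 0 := inv_ne_zero hy
  have key : x / y - 1 = (x - y) * y⁻¹ := by
    field_simp
  have hne : (x - y) * y⁻¹ ≠ 0 := mul_ne_zero hxy hyi
  have hoinv : (y⁻¹ : HahnSeries ℝ ℝ).order = - y.order := by
    have h2 := order_mul hy hyi
    rw [mul_inv_cancel₀ hy, order_one] at h2
    linarith
  rw [key, ← order_eq_orderTop_of_ne_zero hne, order_mul hxy hyi, hoinv]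
  rw [show ((0 : WithTop ℝ) < ((x - y).order + -y.order : ℝ)) ↔
      y.order < (x - y).order by
    rw [← WithTop.coe_zero, WithTop.coe_lt_coe]; constructor <;> intro <;> linarith]
  constructor
  · rintro ⟨h1, h2⟩
    by_contra hle
    push_neg at hle
    have hcne : (x - y).coeff ((x - y).order) ≠ 0 := by
      rw [← leadingCoeff_eq]; exact leadingCoeff_ne_zero.mpr hxy
    rcases lt_or_eq_of_le hle with hlt | heq
    · have hxc : x.coeff ((x - y).order) = 0 := by
        apply coeff_eq_zero_of_lt_orderTop
        rw [← order_eq_orderTop_of_ne_zero hx, WithTop.coe_lt_coe, h1]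
        exact hlt
      have hyc : y.coeff ((x - y).order) = 0 := by
        apply coeff_eq_zero_of_lt_orderTop
        rw [← order_eq_orderTop_of_ne_zero hy, WithTop.coe_lt_coe]
        exact hlt
      apply hcne
      simp [coeff_sub, hxc, hyc]
    · apply hcne
      rw [heq, coeff_sub, ← h1]
      rw [leadingCoeff_eq, leadingCoeff_eq, h1] at h2
      rw [h1, h2, sub_self]
  · intro hlt
    have hlt' : y.orderTop < (x - y).orderTop := by
      rw [← order_eq_orderTop_of_ne_zero hy, ← order_eq_orderTop_of_ne_zero hxy,
        WithTop.coe_lt_coe]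
      exact hlt
    have hx' : x = (x - y) + y := by ring
    constructor
    · have := orderTop_add_eq_right hlt'
      rw [← hx'] at this
      rw [← order_eq_orderTop_of_ne_zero hx, ← order_eq_orderTop_of_ne_zero hy] at this
      exact_mod_cast this
    · have := leadingCoeff_add_eq_right hlt'
      rw [← hx'] at this
      exact this
end

section
/- Let x, y be nonzero elements of the Hahn series field F = HahnSeries ℝ ℝ whose leading terms differ, i.e. (x.order, leadingCoeff x) ≠ (y.order, leadingCoeff y). Then 0 < leadingCoeff (y − x) holds if and only if either (x.order = y.order and leadingCoeff x < leadingCoeff y), or (x.order < y.order and leadingCoeff x < 0), or (y.order < x.order and 0 < leadingCoeff y). (The ordering induced on the group of leading terms is the lexicographic-type ordering on ℝ ⊕ ℝ^×.) -/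
open HahnSeries

theorem stmt_5 (x y : HahnSeries ℝ ℝ) (hx : x ≠ 0) (hy : y ≠ 0)
    (hne : (x.order, x.leadingCoeff) ≠ (y.order, y.leadingCoeff)) :
    0 < (y - x).leadingCoeff ↔
      (x.order = y.order ∧ x.leadingCoeff < y.leadingCoeff) ∨
        (x.order < y.order ∧ x.leadingCoeff < 0) ∨
          (y.order < x.order ∧ 0 < y.leadingCoeff) := by
  rcases lt_trichotomy x.order y.order with h | h | h
  · have hot : (-x).orderTop < y.orderTop := by
      rw [orderTop_neg, orderTop_of_ne_zero hx, orderTop_of_ne_zero hy,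
        ← order_of_ne hx, ← order_of_ne hy]
      exact_mod_cast h
    have : (y - x).leadingCoeff = -x.leadingCoeff := by
      rw [sub_eq_add_neg, add_comm, leadingCoeff_add_eq_left hot]
      simp [leadingCoeff_eq, order_neg]
    rw [this]
    constructor
    · intro hpos
      exact Or.inr (Or.inl ⟨h, by linarith⟩)
    · rintro (⟨h1, _⟩ | ⟨_, h2⟩ | ⟨h3, _⟩)
      · exact absurd h1 h.ne
      · linarith
      · exact absurd h3 (lt_asymm h)
  · -- equal orders
    have hlcne : x.leadingCoeff ≠ y.leadingCoeff := fun hc => hne (by rw [h, hc])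
    set d := x.order with hd
    have hc : (y - x).coeff d = y.leadingCoeff - x.leadingCoeff := by
      rw [coeff_sub, leadingCoeff_eq, leadingCoeff_eq, ← hd, h]
    have hcne : (y - x).coeff d ≠ 0 := by
      rw [hc]; exact sub_ne_zero_of_ne hlcne.symm
    have hz : y - x ≠ 0 := ne_zero_of_coeff_ne_zero hcne
    have hord : (y - x).order = d := by
      refine le_antisymm (order_le_of_coeff_ne_zero hcne) ?_
      by_contra hlt
      push_neg at hlt
      have := coeff_order_eq_zero.not.mpr hz
      apply this
      rw [coeff_sub, coeff_eq_zero_of_lt_order (lt_of_lt_of_eq hlt hd),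
        coeff_eq_zero_of_lt_order (lt_of_lt_of_eq hlt h), sub_zero]
    have hlc : (y - x).leadingCoeff = y.leadingCoeff - x.leadingCoeff := by
      rw [leadingCoeff_eq, hord, hc]
    rw [hlc]
    constructor
    · intro hpos
      exact Or.inl ⟨h, by linarith⟩
    · rintro (⟨_, h1⟩ | ⟨h2, _⟩ | ⟨h3, _⟩)
      · linarith
      · exact absurd h h2.ne
      · exact absurd h h3.ne'
  · have hot : y.orderTop < x.orderTop := by
      rw [orderTop_of_ne_zero hx, orderTop_of_ne_zero hy, ← order_of_ne hx, ← order_of_ne hy]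
      exact_mod_cast h
    have : (y - x).leadingCoeff = y.leadingCoeff := leadingCoeff_sub hot
    rw [this]
    constructor
    · intro hpos
      exact Or.inr (Or.inr ⟨h, hpos⟩)
    · rintro (⟨h1, _⟩ | ⟨h2, _⟩ | ⟨_, h3⟩)
      · exact absurd h1.symm h.ne
      · exact absurd h2 (lt_asymm h)
      · exact h3
end

section
/- Let b, c be elements of the Hahn series field F = HahnSeries ℝ ℝ with 0 < orderTop b and 0 < orderTop c. Then the family n ↦ (n!)⁻¹ • bⁿ (n ∈ ℕ) is a summable family of Hahn series; writing E b for its sum (the restricted exponential), one has 0 < orderTop (E b − 1) and E (b + c) = (E b) · (E c). (Thus E is a group homomorphism from the additive group M into the multiplicative group 1 + M.) -/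
open HahnSeries HahnSeries.SummableFamily

noncomputable def scaleFam (r : ℕ → ℝ) (s : SummableFamily ℝ ℝ ℕ) : SummableFamily ℝ ℝ ℕ where
  toFun n := r n • s n
  isPWO_iUnion_support' := s.isPWO_iUnion_support.mono (Set.iUnion_mono fun n g hg => by
    have h1 : r n * (s n).coeff g ≠ 0 := by
      simpa [HahnSeries.coeff_smul] using hg
    exact right_ne_zero_of_mul h1)
  finite_co_support' g := (s.finite_co_support' g).subset fun n hn => by
    have h1 : r n * (s n).coeff g ≠ 0 := by
      simpa [HahnSeries.coeff_smul] using hn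
    exact right_ne_zero_of_mul h1

@[simp] lemma scaleFam_apply (r : ℕ → ℝ) (s : SummableFamily ℝ ℝ ℕ) (n : ℕ) :
    scaleFam r s n = r n • s n := rfl

lemma coeff_sum {α : Type*} (t : Finset α) (f : α → HahnSeries ℝ ℝ) (g : ℝ) :
    (∑ p ∈ t, f p).coeff g = ∑ p ∈ t, (f p).coeff g :=
  map_sum (HahnSeries.coeff.addMonoidHom g) f t

lemma hsum_antidiag (T : SummableFamily ℝ ℝ (ℕ × ℕ)) (S : SummableFamily ℝ ℝ ℕ)
    (h : ∀ n, S n = ∑ p ∈ Finset.HasAntidiagonal.antidiagonal n, T p) : S.hsum = T.hsum := by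
  ext g
  classical
  set u : Finset ℕ := (S.finite_co_support g).toFinset ∪
    ((T.finite_co_support g).toFinset.image fun p => p.1 + p.2) with hu
  have hS : S.hsum.coeff g = ∑ n ∈ u, (S n).coeff g :=
    coeff_hsum_eq_sum_of_subset fun n hn => by
      simp [hu, Set.Finite.mem_toFinset]
      exact Or.inl ((Set.Finite.mem_toFinset _).2 hn)
  have hdisj : Set.PairwiseDisjoint (u : Set ℕ) (fun n => Finset.HasAntidiagonal.antidiagonal n) := by
    intro m _ n _ hmn
    simp only [Finset.disjoint_left, Finset.HasAntidiagonal.mem_antidiagonal]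
    intro p hp hp'
    exact hmn (hp.symm.trans hp')
  have hT : T.hsum.coeff g = ∑ p ∈ u.biUnion (fun n => Finset.HasAntidiagonal.antidiagonal n), (T p).coeff g :=
    coeff_hsum_eq_sum_of_subset fun p hp => by
      simp only [Finset.mem_coe, Finset.mem_biUnion, Finset.HasAntidiagonal.mem_antidiagonal]
      refine ⟨p.1 + p.2, ?_, rfl⟩
      simp only [hu, Finset.mem_union, Finset.mem_image]
      exact Or.inr ⟨p, (Set.Finite.mem_toFinset _).2 hp, rfl⟩
  rw [hS, hT, Finset.sum_biUnion hdisj]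
  exact Finset.sum_congr rfl fun n _ => by rw [h n, _root_.coeff_sum]

lemma fact_inv_choose (n k : ℕ) (hk : k ≤ n) :
    ((n.factorial : ℝ))⁻¹ * (n.choose k : ℝ) =
      ((k.factorial : ℝ))⁻¹ * (((n - k).factorial : ℝ))⁻¹ := by
  have key : (n.choose k : ℝ) * k.factorial * (n - k).factorial = n.factorial := by
    exact_mod_cast congrArg (Nat.cast : ℕ → ℝ) (Nat.choose_mul_factorial_mul_factorial hk)
  have h1 : (k.factorial : ℝ) ≠ 0 := Nat.cast_ne_zero.mpr k.factorial_ne_zero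
  have h2 : ((n - k).factorial : ℝ) ≠ 0 := Nat.cast_ne_zero.mpr (n - k).factorial_ne_zero
  have h3 : (n.factorial : ℝ) ≠ 0 := Nat.cast_ne_zero.mpr n.factorial_ne_zero
  field_simp
  linarith [key]

lemma exp_binomial (x y : HahnSeries ℝ ℝ) (n : ℕ) :
    ((n.factorial : ℝ))⁻¹ • (x + y) ^ n =
      ∑ p ∈ Finset.HasAntidiagonal.antidiagonal n,
        (((p.1.factorial : ℝ))⁻¹ • x ^ p.1) * (((p.2.factorial : ℝ))⁻¹ • y ^ p.2) := by
  simp only [← HahnSeries.C_mul_eq_smul]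
  rw [Finset.Nat.sum_antidiagonal_eq_sum_range_succ_mk, add_pow, Finset.mul_sum]
  refine Finset.sum_congr rfl fun k hk => ?_
  have hk' : k ≤ n := Nat.lt_succ_iff.mp (Finset.mem_range.mp hk)
  have hcast : ((n.choose k : ℕ) : HahnSeries ℝ ℝ) = HahnSeries.C ((n.choose k : ℕ) : ℝ) :=
    (map_natCast (HahnSeries.C (R := ℝ)) _).symm
  calc HahnSeries.C ((n.factorial : ℝ))⁻¹ * (x ^ k * y ^ (n - k) * ((n.choose k : ℕ) : HahnSeries ℝ ℝ))
      = HahnSeries.C ((n.factorial : ℝ))⁻¹ * HahnSeries.C ((n.choose k : ℕ) : ℝ) *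
        (x ^ k * y ^ (n - k)) := by rw [hcast]; ring
    _ = HahnSeries.C (((n.factorial : ℝ))⁻¹ * ((n.choose k : ℕ) : ℝ)) *
        (x ^ k * y ^ (n - k)) := by rw [map_mul]
    _ = HahnSeries.C (((k.factorial : ℝ))⁻¹ * (((n - k).factorial : ℝ))⁻¹) *
        (x ^ k * y ^ (n - k)) := by rw [fact_inv_choose n k hk']
    _ = HahnSeries.C ((k.factorial : ℝ))⁻¹ * x ^ k *
        (HahnSeries.C (((n - k).factorial : ℝ))⁻¹ * y ^ (n - k)) := by rw [map_mul]; ring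

lemma orderTop_pow_pos {x : HahnSeries ℝ ℝ} (hx : 0 < x.orderTop) {n : ℕ} (hn : 1 ≤ n) :
    0 < (x ^ n).orderTop := by
  induction n with
  | zero => omega
  | succ m ih =>
    rcases Nat.eq_or_lt_of_le hn with h | h
    · simpa [← h] using hx
    · have hm : 1 ≤ m := by omega
      have h1 := orderTop_add_le_mul (x := x) (y := x ^ m)
      rw [pow_succ']
      refine lt_of_lt_of_le ?_ h1
      exact lt_of_lt_of_le hx (le_add_of_nonneg_right (le_of_lt (ih hm)))

lemma exp_sub_one_orderTop {x : HahnSeries ℝ ℝ} (hx : 0 < x.orderTop)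
    (S : SummableFamily ℝ ℝ ℕ) (hS : ∀ n : ℕ, S n = ((n.factorial : ℝ))⁻¹ • x ^ n) :
    0 < (S.hsum - 1).orderTop := by
  have hcoeff : ∀ g : ℝ, g ≤ 0 → (S.hsum - 1).coeff g = 0 := by
    intro g hg
    have h1 : S.hsum.coeff g = (1 : HahnSeries ℝ ℝ).coeff g := by
      rw [coeff_hsum]
      have : ∀ n : ℕ, n ≠ 0 → (S n).coeff g = 0 := by
        intro n hn
        rw [hS n, HahnSeries.coeff_smul, coeff_eq_zero_of_lt_orderTop
          (lt_of_le_of_lt (by exact_mod_cast hg) (orderTop_pow_pos hx (Nat.one_le_iff_ne_zero.mpr hn))),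
          smul_zero]
      rw [finsum_eq_single _ 0 this, hS 0]
      simp
    rw [HahnSeries.coeff_sub, h1, sub_self]
  by_contra hcon
  push_neg at hcon
  have hne : S.hsum - 1 ≠ 0 := by
    intro h
    rw [h, orderTop_zero] at hcon
    exact absurd hcon (by simp)
  obtain ⟨g, hg⟩ := WithTop.ne_top_iff_exists.mp (orderTop_ne_top.2 hne)
  have hgle : g ≤ 0 := by exact_mod_cast hg.trans_le hcon
  exact coeff_orderTop_ne hg.symm (hcoeff g hgle)

theorem stmt_9 (b c : HahnSeries ℝ ℝ) (hb : 0 < b.orderTop) (hc : 0 < c.orderTop) :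
    -- the family `n ↦ (n!)⁻¹ • bⁿ` is summable
    (∃ S : SummableFamily ℝ ℝ ℕ, ∀ n : ℕ, S n = ((n.factorial : ℝ))⁻¹ • b ^ n) ∧
    -- writing `E b` for the sum of this family, `E b ∈ 1 + M` and `E (b + c) = E b * E c`
    (∀ Sb Sc Sbc : SummableFamily ℝ ℝ ℕ,
      (∀ n : ℕ, Sb n = ((n.factorial : ℝ))⁻¹ • b ^ n) →
      (∀ n : ℕ, Sc n = ((n.factorial : ℝ))⁻¹ • c ^ n) →
      (∀ n : ℕ, Sbc n = ((n.factorial : ℝ))⁻¹ • (b + c) ^ n) →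
      0 < (Sb.hsum - 1).orderTop ∧ Sbc.hsum = Sb.hsum * Sc.hsum) := by
  constructor
  · exact ⟨scaleFam (fun n => ((n.factorial : ℝ))⁻¹) (powers b),
      fun n => by simp [powers_of_orderTop_pos hb]⟩
  · intro Sb Sc Sbc hSb hSc hSbc
    refine ⟨exp_sub_one_orderTop hb Sb hSb, ?_⟩
    have hT : ∀ p : ℕ × ℕ, (SummableFamily.smul Sb Sc) p = Sb p.1 * Sc p.2 := by
      intro p
      rw [SummableFamily.smul_toFun, HahnSeries.of_symm_smul_of_eq_mul]
    have hfib : ∀ n : ℕ, Sbc n = ∑ p ∈ Finset.HasAntidiagonal.antidiagonal n, (SummableFamily.smul Sb Sc) p := by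
      intro n
      rw [hSbc n, exp_binomial]
      exact Finset.sum_congr rfl fun p _ => by rw [hT p, hSb, hSc]
    rw [hsum_antidiag (SummableFamily.smul Sb Sc) Sbc hfib, SummableFamily.smul_hsum,
      HahnSeries.of_symm_smul_of_eq_mul]
end

section
/- In the Hahn series field F = HahnSeries ℝ ℝ, for a ∈ O (i.e. 0 ≤ orderTop a) one has 0 < orderTop (a − single 0 (a.coeff 0)); define expO a = single 0 (Real.exp (a.coeff 0)) · E (a − single 0 (a.coeff 0)). Then expO (a + b) = (expO a) · (expO b) for all a, b ∈ O, expO is injective on O, and the image of O under expO is exactly the set U⁺ of positive units {x ∈ F : x ≠ 0, x.order = 0, 0 < leadingCoeff x}. (The real exponential extends to a group isomorphism from the additive group O onto the multiplicative group U⁺.) -/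
open HahnSeries

/-- The exponential summable family `n ↦ (n!)⁻¹ • bⁿ` of an element `b` of positive
order in the Hahn series field. -/
noncomputable def expFamily (b : HahnSeries ℝ ℝ) (hb : 0 < b.orderTop) :
    SummableFamily ℝ ℝ ℕ where
  toFun n := ((n.factorial : ℝ))⁻¹ • b ^ n
  isPWO_iUnion_support' := by
    refine (SummableFamily.powers b).isPWO_iUnion_support.mono ?_
    intro g hg
    obtain ⟨n, hn⟩ := Set.mem_iUnion.mp hg
    refine Set.mem_iUnion.mpr ⟨n, ?_⟩
    have hn' : (((n.factorial : ℝ))⁻¹ • b ^ n).coeff g ≠ 0 := hn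
    have hbn : (b ^ n).coeff g ≠ 0 := fun h => hn' (by rw [HahnSeries.coeff_smul, h, smul_zero])
    rw [SummableFamily.powers_of_orderTop_pos hb]
    exact hbn
  finite_co_support' g := by
    refine ((SummableFamily.powers b).finite_co_support g).subset ?_
    intro n hn
    simp only [Set.mem_setOf_eq] at hn ⊢
    intro h
    apply hn
    rw [HahnSeries.coeff_smul]
    have h' : (b ^ n).coeff g = 0 := by
      rw [← SummableFamily.powers_of_orderTop_pos hb]; exact h
    rw [h', smul_zero]

/-- The restricted exponential on the maximal ideal of the valuation ring:
`E b = ∑_{n} (n!)⁻¹ bⁿ` when `0 < orderTop b`, and (junk value) `0` otherwise. -/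
noncomputable def E (b : HahnSeries ℝ ℝ) : HahnSeries ℝ ℝ :=
  if hb : 0 < b.orderTop then (expFamily b hb).hsum else 0

/-- The exponential on the valuation ring `O = {x : 0 ≤ orderTop x}`, combining the
real exponential on the constant term with the restricted exponential `E`. -/
noncomputable def expO (a : HahnSeries ℝ ℝ) : HahnSeries ℝ ℝ :=
  HahnSeries.single (0 : ℝ) (Real.exp (a.coeff 0)) *
    E (a - HahnSeries.single (0 : ℝ) (a.coeff 0))

noncomputable section ExpAux

open Finset

abbrev F := HahnSeries ℝ ℝ

lemma coeff_order_ne_zero {x : F} (hx : x ≠ 0) : x.coeff x.order ≠ 0 := by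
  rw [← leadingCoeff_eq]; exact leadingCoeff_ne_zero.mpr hx

lemma posOrderTop_of_coeff {x : F} (h : ∀ g : ℝ, g ≤ 0 → x.coeff g = 0) : 0 < x.orderTop := by
  by_cases hx : x = 0
  · simp [hx]
  · rw [zero_lt_orderTop_iff hx]
    by_contra hord
    push_neg at hord
    exact coeff_order_ne_zero hx (h _ hord)

lemma nonnegOrderTop_of_coeff {x : F} (h : ∀ g : ℝ, g < 0 → x.coeff g = 0) : 0 ≤ x.orderTop := by
  by_cases hx : x = 0
  · simp [hx]
  · rw [zero_le_orderTop_iff]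
    by_contra hord
    push_neg at hord
    exact coeff_order_ne_zero hx (h _ hord)

lemma coeff_of_posOrderTop {x : F} (hx : 0 < x.orderTop) {g : ℝ} (hg : g ≤ 0) : x.coeff g = 0 :=
  coeff_eq_zero_of_lt_orderTop (lt_of_le_of_lt (by exact_mod_cast hg) hx)

lemma coeff_of_nonnegOrderTop {x : F} (hx : 0 ≤ x.orderTop) {g : ℝ} (hg : g < 0) : x.coeff g = 0 :=
  coeff_eq_zero_of_lt_orderTop (lt_of_lt_of_le (by exact_mod_cast hg) hx)

lemma coeff_pow_eq_zero {b : F} (hb : 0 < b.orderTop) {n : ℕ} (hn : 1 ≤ n) {g : ℝ}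
    (hg : g ≤ 0) : (b ^ n).coeff g = 0 := by
  by_cases hbz : b = 0
  · rw [hbz, zero_pow (by omega), HahnSeries.coeff_zero]
  · have h2 : 0 < (b ^ n).orderTop := by
      by_cases hz : b ^ n = 0
      · simp [hz]
      · have h1 : 0 < b.order := (zero_lt_orderTop_iff hbz).mp hb
        rw [zero_lt_orderTop_iff hz, order_pow]
        positivity
    exact coeff_of_posOrderTop h2 hg

lemma coeff_pow_eq_zero_of_lt {b : F} {n : ℕ} {g : ℝ}
    (hg : g < n • b.order) : (b ^ n).coeff g = 0 := by
  apply coeff_eq_zero_of_lt_order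
  rwa [order_pow]

/-- The Euler derivation `t d/dt` on Hahn series: `coeff g (D x) = g * coeff g x`. -/
def Dfun (x : F) : F where
  coeff g := g * x.coeff g
  isPWO_support' := x.isPWO_support'.mono (by
    intro g hg
    simp only [Function.mem_support] at hg ⊢
    exact fun h => hg (by rw [h, mul_zero]))

@[simp] lemma Dfun_coeff {x : F} {g : ℝ} : (Dfun x).coeff g = g * x.coeff g := rfl

lemma Dsupp (x : F) {g : ℝ} (h : (Dfun x).coeff g ≠ 0) : x.coeff g ≠ 0 :=
  fun hc => h (by rw [Dfun_coeff, hc, mul_zero])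

lemma Dfun_add (x y : F) : Dfun (x + y) = Dfun x + Dfun y := by
  ext g; simp [mul_add]

lemma Dfun_smul (r : ℝ) (x : F) : Dfun (r • x) = r • Dfun x := by
  ext g; simp; ring

lemma Dfun_one : Dfun (1 : F) = 0 := by
  ext g
  simp only [Dfun_coeff, HahnSeries.coeff_zero]
  rcases eq_or_ne g 0 with h | h
  · rw [h, zero_mul]
  · rw [← single_zero_one, coeff_single_of_ne h, mul_zero]

lemma Dfun_mul (x y : F) : Dfun (x * y) = Dfun x * y + x * Dfun y := by
  ext g
  have hx : (Dfun x).support ⊆ x.support := by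
    intro g hg
    simp only [HahnSeries.mem_support, Dfun_coeff] at hg ⊢
    exact fun h => hg (by rw [h, mul_zero])
  have hy : (Dfun y).support ⊆ y.support := by
    intro g hg
    simp only [HahnSeries.mem_support, Dfun_coeff] at hg ⊢
    exact fun h => hg (by rw [h, mul_zero])
  rw [HahnSeries.coeff_add, coeff_mul_left' x.isPWO_support hx,
    coeff_mul_right' y.isPWO_support hy, Dfun_coeff, coeff_mul, Finset.mul_sum,
    ← Finset.sum_add_distrib]
  apply Finset.sum_congr rfl
  intro p hp
  obtain ⟨_, _, hpg⟩ := Finset.mem_addAntidiagonal.mp hp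
  simp only [Dfun_coeff]
  rw [← hpg]; ring

lemma smul_mul (r : ℝ) (x y : F) : (r • x) * y = r • (x * y) := by
  rw [← single_zero_mul_eq_smul, ← single_zero_mul_eq_smul, mul_assoc]

lemma mul_smul' (r : ℝ) (x y : F) : x * (r • y) = r • (x * y) := by
  rw [mul_comm, smul_mul, mul_comm]

lemma Dfun_pow (b : F) (n : ℕ) : Dfun (b ^ (n+1)) = ((n:ℝ)+1) • (b ^ n * Dfun b) := by
  induction n with
  | zero => simp
  | succ n ih =>
    rw [pow_succ, Dfun_mul, ih, smul_mul, mul_right_comm, ← pow_succ]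
    nth_rewrite 2 [← one_smul ℝ (b ^ (n+1) * Dfun b)]
    push_cast
    module

lemma eq_single_of_Dfun_eq_zero {x : F} (h : Dfun x = 0) :
    x = HahnSeries.single (0:ℝ) (x.coeff 0) := by
  ext g
  rcases eq_or_ne g 0 with rfl | hg
  · rw [coeff_single_same]
  · rw [coeff_single_of_ne hg]
    have := congrArg (fun y => HahnSeries.coeff y g) h
    simp only [Dfun_coeff, HahnSeries.coeff_zero] at this
    exact (mul_eq_zero.mp this).resolve_left hg

namespace HahnSeries.SummableFamily

/-- Termwise derivative of a summable family. -/
def derivFam {α : Type*} (s : SummableFamily ℝ ℝ α) : SummableFamily ℝ ℝ α where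
  toFun a := Dfun (s a)
  isPWO_iUnion_support' := s.isPWO_iUnion_support'.mono
    (Set.iUnion_mono fun a g hg => Dsupp _ hg)
  finite_co_support' g := (s.finite_co_support' g).subset (fun a ha => Dsupp _ ha)

@[simp] lemma derivFam_apply {α : Type*} (s : SummableFamily ℝ ℝ α) (a : α) :
    derivFam s a = Dfun (s a) := rfl

lemma hsum_derivFam {α : Type*} (s : SummableFamily ℝ ℝ α) :
    (derivFam s).hsum = Dfun s.hsum := by
  ext g
  rw [Dfun_coeff, coeff_hsum, coeff_hsum, ← smul_eq_mul, smul_finsum]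
  simp [smul_eq_mul]

lemma coeff_sum {α : Type*} (t : Finset α) (f : α → HahnSeries ℝ ℝ) (g : ℝ) :
    (∑ a ∈ t, f a).coeff g = ∑ a ∈ t, (f a).coeff g :=
  map_sum (coeff.addMonoidHom g) f t

/-- Regrouping a summable family over `ℕ × ℕ` along antidiagonals. -/
def sumAntidiag (s : SummableFamily ℝ ℝ (ℕ × ℕ)) : SummableFamily ℝ ℝ ℕ where
  toFun n := ∑ p ∈ antidiagonal n, s p
  isPWO_iUnion_support' := s.isPWO_iUnion_support'.mono (by
    intro g hg
    obtain ⟨n, hn⟩ := Set.mem_iUnion.mp hg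
    have hn' : (∑ p ∈ antidiagonal n, s p).coeff g ≠ 0 := hn
    rw [coeff_sum] at hn'
    obtain ⟨p, _, hp⟩ := Finset.exists_ne_zero_of_sum_ne_zero hn'
    exact Set.mem_iUnion.mpr ⟨p, hp⟩)
  finite_co_support' g := by
    refine (((s.finite_co_support' g).image (fun p => p.1 + p.2))).subset ?_
    intro n hn
    simp only [Set.mem_setOf_eq] at hn
    rw [coeff_sum] at hn
    obtain ⟨p, hpmem, hp⟩ := Finset.exists_ne_zero_of_sum_ne_zero hn
    exact ⟨p, hp, (Finset.HasAntidiagonal.mem_antidiagonal.mp hpmem)⟩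

@[simp] lemma sumAntidiag_apply (s : SummableFamily ℝ ℝ (ℕ × ℕ)) (n : ℕ) :
    sumAntidiag s n = ∑ p ∈ antidiagonal n, s p := rfl

lemma hsum_sumAntidiag (s : SummableFamily ℝ ℝ (ℕ × ℕ)) :
    (sumAntidiag s).hsum = s.hsum := by
  ext g
  rw [coeff_hsum, coeff_hsum]
  classical
  set T : Finset (ℕ × ℕ) := (s.finite_co_support' g).toFinset with hT
  have hsupp2 : (Function.support fun p => (s p).coeff g) ⊆ ↑T := by
    intro p hp; simp [hT, Set.Finite.mem_toFinset]; exact hp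
  rw [finsum_eq_finset_sum_of_support_subset _ hsupp2]
  set N : Finset ℕ := T.image (fun p => p.1 + p.2) with hN
  have hsupp1 : (Function.support fun n => ((sumAntidiag s) n).coeff g) ⊆ ↑N := by
    intro n hn
    rw [Function.mem_support] at hn
    have : ((sumAntidiag s) n).coeff g = ∑ p ∈ antidiagonal n, (s p).coeff g := coeff_sum _ _ _
    rw [this] at hn
    obtain ⟨p, hpmem, hp⟩ := Finset.exists_ne_zero_of_sum_ne_zero hn
    refine Finset.mem_coe.mpr (Finset.mem_image.mpr ⟨p, ?_, Finset.HasAntidiagonal.mem_antidiagonal.mp hpmem⟩)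
    simp [hT, Set.Finite.mem_toFinset]; exact hp
  rw [finsum_eq_finset_sum_of_support_subset _ hsupp1]
  have step : ∀ n ∈ N, ((sumAntidiag s) n).coeff g = ∑ p ∈ antidiagonal n, (s p).coeff g :=
    fun n _ => coeff_sum _ _ _
  have hdisj : (↑N : Set ℕ).PairwiseDisjoint (fun n => antidiagonal n) := by
    intro m _ n _ hmn
    simp only [Function.onFun, Finset.disjoint_left]
    intro p hpm hpn
    exact hmn ((Finset.HasAntidiagonal.mem_antidiagonal.mp hpm) ▸ (Finset.HasAntidiagonal.mem_antidiagonal.mp hpn) ▸ rfl)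
  rw [Finset.sum_congr rfl step, ← Finset.sum_biUnion hdisj]
  refine (Finset.sum_subset ?_ ?_).symm
  · intro p hp
    refine Finset.mem_biUnion.mpr ⟨p.1 + p.2, ?_, ?_⟩
    · exact Finset.mem_image.mpr ⟨p, hp, rfl⟩
    · exact Finset.HasAntidiagonal.mem_antidiagonal.mpr rfl
  · intro p _ hp
    by_contra h
    exact hp (by simp [hT, Set.Finite.mem_toFinset]; exact h)

end HahnSeries.SummableFamily

@[simp] lemma expFamily_apply {b : F} (hb : 0 < b.orderTop) (n : ℕ) :
    expFamily b hb n = ((n.factorial : ℝ))⁻¹ • b ^ n := rfl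

lemma E_eq {b : F} (hb : 0 < b.orderTop) : E b = (expFamily b hb).hsum := dif_pos hb

lemma E_coeff_nonpos {b : F} (hb : 0 < b.orderTop) {g : ℝ} (hg : g ≤ 0) :
    (E b).coeff g = (1 : F).coeff g := by
  rw [E_eq hb, SummableFamily.coeff_hsum]
  rw [finsum_eq_single _ 0 (fun n hn => ?_)]
  · simp
  · rw [expFamily_apply, HahnSeries.coeff_smul,
      coeff_pow_eq_zero hb (Nat.one_le_iff_ne_zero.mpr hn) hg, smul_zero]

lemma E_coeff_zero {b : F} (hb : 0 < b.orderTop) : (E b).coeff 0 = 1 := by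
  rw [E_coeff_nonpos hb le_rfl, HahnSeries.coeff_one, if_pos rfl]

lemma E_sub_one_pos {b : F} (hb : 0 < b.orderTop) : 0 < (E b - 1).orderTop := by
  apply posOrderTop_of_coeff
  intro g hg
  rw [HahnSeries.coeff_sub, E_coeff_nonpos hb hg, sub_self]

lemma E_ne_zero {b : F} (hb : 0 < b.orderTop) : E b ≠ 0 :=
  HahnSeries.ne_zero_of_coeff_ne_zero (g := 0) (by rw [E_coeff_zero hb]; norm_num)

lemma posOrderTop_add {b c : F} (hb : 0 < b.orderTop) (hc : 0 < c.orderTop) :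
    0 < (b + c).orderTop := by
  apply posOrderTop_of_coeff
  intro g hg
  rw [HahnSeries.coeff_add, coeff_of_posOrderTop hb hg, coeff_of_posOrderTop hc hg, add_zero]

lemma factorial_inv_eq {n k : ℕ} (hkn : k ≤ n) :
    (n.factorial : ℝ)⁻¹ * (n.choose k : ℝ) =
      (k.factorial : ℝ)⁻¹ * ((n - k).factorial : ℝ)⁻¹ := by
  have hfact := Nat.choose_mul_factorial_mul_factorial hkn
  have h1 : (k.factorial : ℝ) ≠ 0 := by positivity
  have h2 : ((n - k).factorial : ℝ) ≠ 0 := by positivity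
  have h3 : (n.factorial : ℝ) ≠ 0 := by positivity
  field_simp
  push_cast [← hfact]; ring

lemma E_mul {b c : F} (hb : 0 < b.orderTop) (hc : 0 < c.orderTop) :
    E (b + c) = E b * E c := by
  have hbc := posOrderTop_add hb hc
  rw [E_eq hb, E_eq hc, E_eq hbc, ← HahnSeries.of_symm_smul_of_eq_mul,
    ← SummableFamily.smul_hsum, ← SummableFamily.hsum_sumAntidiag]
  congr 1
  apply SummableFamily.ext
  intro n
  rw [SummableFamily.sumAntidiag_apply, expFamily_apply]
  have hterm : ∀ p : ℕ × ℕ,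
      (SummableFamily.smul (expFamily b hb) (expFamily c hc)) p
        = ((p.1.factorial : ℝ)⁻¹ * (p.2.factorial : ℝ)⁻¹) • (b ^ p.1 * c ^ p.2) := by
    intro p
    rw [SummableFamily.smul_toFun, HahnSeries.of_symm_smul_of_eq_mul,
      expFamily_apply, expFamily_apply, smul_mul, mul_smul', smul_smul]
  rw [Finset.sum_congr rfl (fun p _ => hterm p),
    Finset.Nat.sum_antidiagonal_eq_sum_range_succ_mk
      (f := fun p => ((p.1.factorial : ℝ)⁻¹ * (p.2.factorial : ℝ)⁻¹) • (b ^ p.1 * c ^ p.2)),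
    add_pow, Finset.smul_sum]
  apply Finset.sum_congr rfl
  intro k hk
  have hkn : k ≤ n := Nat.lt_succ_iff.mp (Finset.mem_range.mp hk)
  rw [mul_comm (b ^ k * c ^ (n - k)), ← nsmul_eq_mul, ← Nat.cast_smul_eq_nsmul ℝ,
    smul_smul, factorial_inv_eq hkn]

lemma Dfun_zero : Dfun 0 = 0 := by
  ext g; simp

lemma rsmul_pow (r : ℝ) (x : F) (n : ℕ) : (r • x) ^ n = r ^ n • x ^ n := by
  induction n with
  | zero => simp
  | succ n ih => rw [pow_succ, ih, smul_mul, mul_smul', smul_smul, ← pow_succ, pow_succ x]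

lemma E_zero : E 0 = 1 := by
  have h : (0 : WithTop ℝ) < (0 : F).orderTop := by simp
  rw [E_eq h]
  ext g
  rw [SummableFamily.coeff_hsum, finsum_eq_single _ 0 (fun n hn => ?_)]
  · simp [expFamily_apply]
  · rw [expFamily_apply, zero_pow hn, smul_zero, HahnSeries.coeff_zero]

lemma Dfun_E {b : F} (hb : 0 < b.orderTop) : Dfun (E b) = Dfun b * E b := by
  rw [E_eq hb, ← SummableFamily.hsum_derivFam, ← SummableFamily.hsum_smul,
    ← SummableFamily.hsum_embDomain (Dfun b • expFamily b hb) ⟨Nat.succ, Nat.succ_injective⟩]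
  congr 1
  apply SummableFamily.ext
  rintro (_ | n)
  · rw [SummableFamily.embDomain_notin_range, SummableFamily.derivFam_apply, expFamily_apply, pow_zero]
    · simp only [Nat.factorial_zero, Nat.cast_one, inv_one, one_smul]
      exact Dfun_one
    · rw [Set.mem_range]
      push_neg
      exact fun n => Nat.succ_ne_zero n
  · refine Eq.trans ?_ (SummableFamily.embDomain_image _ ⟨Nat.succ, Nat.succ_injective⟩).symm
    rw [SummableFamily.derivFam_apply, expFamily_apply,
      SummableFamily.smul_apply, HahnSeries.of_symm_smul_of_eq_mul, expFamily_apply,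
      Dfun_smul, Dfun_pow, smul_smul, mul_smul', mul_comm (Dfun b)]
    congr 1
    have h1 : ((n+1).factorial : ℝ) = (n+1) * n.factorial := by
      rw [Nat.factorial_succ]; push_cast; ring
    rw [h1]
    have h2 : ((n:ℝ)+1) ≠ 0 := by positivity
    have h3 : (n.factorial : ℝ) ≠ 0 := by positivity
    field_simp

noncomputable def logFamily (u : F) (hu : 0 < u.orderTop) : SummableFamily ℝ ℝ ℕ where
  toFun n := ((-1)^(n+1) * (n:ℝ)⁻¹) • u ^ n
  isPWO_iUnion_support' := by
    refine (SummableFamily.powers u).isPWO_iUnion_support.mono ?_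
    intro g hg
    obtain ⟨n, hn⟩ := Set.mem_iUnion.mp hg
    refine Set.mem_iUnion.mpr ⟨n, ?_⟩
    have hn' : (((-1)^(n+1) * (n:ℝ)⁻¹) • u ^ n).coeff g ≠ 0 := hn
    have hun : (u ^ n).coeff g ≠ 0 := fun h => hn' (by rw [HahnSeries.coeff_smul, h, smul_zero])
    rw [SummableFamily.powers_of_orderTop_pos hu]
    exact hun
  finite_co_support' g := by
    refine ((SummableFamily.powers u).finite_co_support g).subset ?_
    intro n hn
    simp only [Set.mem_setOf_eq] at hn ⊢
    intro h
    apply hn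
    rw [HahnSeries.coeff_smul]
    have h' : (u ^ n).coeff g = 0 := by
      rw [← SummableFamily.powers_of_orderTop_pos hu]; exact h
    rw [h', smul_zero]

@[simp] lemma logFamily_apply {u : F} (hu : 0 < u.orderTop) (n : ℕ) :
    logFamily u hu n = ((-1)^(n+1) * (n:ℝ)⁻¹) • u ^ n := rfl

noncomputable def LogF (u : F) (hu : 0 < u.orderTop) : F := (logFamily u hu).hsum

lemma LogF_pos {u : F} (hu : 0 < u.orderTop) : 0 < (LogF u hu).orderTop := by
  apply posOrderTop_of_coeff
  intro g hg
  rw [LogF, SummableFamily.coeff_hsum]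
  apply finsum_eq_zero_of_forall_eq_zero
  intro n
  rcases Nat.eq_zero_or_pos n with rfl | hn
  · simp
  · rw [logFamily_apply, HahnSeries.coeff_smul, coeff_pow_eq_zero hu hn hg, smul_zero]

lemma one_add_mul_Dfun_LogF {u : F} (hu : 0 < u.orderTop) :
    (1 + u) * Dfun (LogF u hu) = Dfun u := by
  have hneg : 0 < (-u).orderTop := by rwa [orderTop_neg]
  have hP := SummableFamily.one_sub_self_mul_hsum_powers hneg
  rw [sub_neg_eq_add] at hP
  have hD : Dfun (LogF u hu) = Dfun u * (SummableFamily.powers (-u)).hsum := by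
    rw [LogF, ← SummableFamily.hsum_derivFam, ← SummableFamily.hsum_smul,
      ← SummableFamily.hsum_embDomain (Dfun u • SummableFamily.powers (-u))
        ⟨Nat.succ, Nat.succ_injective⟩]
    congr 1
    apply SummableFamily.ext
    rintro (_ | n)
    · rw [SummableFamily.embDomain_notin_range, SummableFamily.derivFam_apply, logFamily_apply]
      · ext g; simp
      · rw [Set.mem_range]; push_neg; exact fun n => Nat.succ_ne_zero n
    · refine Eq.trans ?_ (SummableFamily.embDomain_image _ ⟨Nat.succ, Nat.succ_injective⟩).symm
      rw [SummableFamily.derivFam_apply, logFamily_apply,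
        SummableFamily.smul_apply, HahnSeries.of_symm_smul_of_eq_mul,
        SummableFamily.powers_of_orderTop_pos hneg, Dfun_smul, Dfun_pow, smul_smul]
      have hpow : (-u) ^ n = ((-1:ℝ)^n) • u ^ n := by
        have huu : (-u) = (-1:ℝ) • u := by ext g; simp
        rw [huu, rsmul_pow]
      rw [hpow, mul_smul', mul_comm (Dfun u)]
      congr 1
      have h2 : ((n:ℝ)+1) ≠ 0 := by positivity
      push_cast
      field_simp
      ring
  rw [hD, ← mul_assoc, mul_comm (1+u), mul_assoc, hP, mul_one]

lemma Dfun_quot_zero {y z : F} (hz : z ≠ 0) (h : Dfun y * z = y * Dfun z) :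
    Dfun (y * z⁻¹) = 0 := by
  have hzz : z * z⁻¹ = 1 := mul_inv_cancel₀ hz
  have h1 : Dfun z * z⁻¹ + z * Dfun z⁻¹ = 0 := by rw [← Dfun_mul, hzz, Dfun_one]
  have key : z^2 * Dfun (y * z⁻¹) = 0 := by
    rw [Dfun_mul]
    linear_combination (z * y) * h1 + (z * z⁻¹) * h
  exact (mul_eq_zero.mp key).resolve_left (pow_ne_zero 2 hz)

lemma E_LogF {u : F} (hu : 0 < u.orderTop) : E (LogF u hu) = 1 + u := by
  set b := LogF u hu with hbdef
  have hb : 0 < b.orderTop := LogF_pos hu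
  set y := E b with hy
  set z := (1 : F) + u with hzdef
  have hz0 : z.coeff 0 = 1 := by
    rw [hzdef, HahnSeries.coeff_add, HahnSeries.coeff_one, if_pos rfl,
      coeff_of_posOrderTop hu le_rfl, add_zero]
  have hz : z ≠ 0 := ne_zero_of_coeff_ne_zero (by rw [hz0]; norm_num)
  have hDyz : Dfun y * z = y * Dfun z := by
    have h1 : Dfun y = Dfun b * y := Dfun_E hb
    have h2 : Dfun z = Dfun u := by
      rw [hzdef, Dfun_add, Dfun_one, zero_add]
    have h3 : z * Dfun b = Dfun u := by
      rw [hzdef, hbdef]; exact one_add_mul_Dfun_LogF hu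
    rw [h1, h2, ← h3]; ring
  have hq := eq_single_of_Dfun_eq_zero (Dfun_quot_zero hz hDyz)
  have hyqz : y = (y * z⁻¹) * z := by field_simp
  rw [hq, single_zero_mul_eq_smul] at hyqz
  have hc : (y * z⁻¹).coeff 0 = 1 := by
    have h0 : y.coeff 0 = 1 := E_coeff_zero hb
    have := congrArg (fun w : F => w.coeff 0) hyqz
    simp only [HahnSeries.coeff_smul, smul_eq_mul, h0, hz0, mul_one] at this
    exact this.symm
  rw [hc, one_smul] at hyqz
  exact hyqz


lemma eq_zero_of_E_eq_one {d : F} (hd : 0 < d.orderTop) (h : E d = 1) : d = 0 := by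
  by_contra hdz
  have hgpos : 0 < d.order := (zero_lt_orderTop_iff hdz).mp hd
  have hkey : (E d).coeff d.order = d.coeff d.order := by
    rw [E_eq hd, SummableFamily.coeff_hsum, finsum_eq_single _ 1 ?_]
    · rw [expFamily_apply]; simp
    · intro n hn
      rcases Nat.eq_zero_or_pos n with rfl | hn1
      · rw [expFamily_apply, pow_zero]
        simp only [Nat.factorial_zero, Nat.cast_one, inv_one, one_smul]
        rw [HahnSeries.coeff_one, if_neg (ne_of_gt hgpos)]
      · have h2 : 2 ≤ n := by omega
        rw [expFamily_apply, HahnSeries.coeff_smul, coeff_pow_eq_zero_of_lt ?_, smul_zero]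
        rw [nsmul_eq_mul]
        have hn2 : (1:ℝ) < (n:ℝ) := by exact_mod_cast (by omega : 1 < n)
        nlinarith [mul_lt_mul_of_pos_right hn2 hgpos]
  rw [h, HahnSeries.coeff_one, if_neg (ne_of_gt hgpos)] at hkey
  exact coeff_order_ne_zero hdz hkey.symm

lemma E_inj {b c : F} (hb : 0 < b.orderTop) (hc : 0 < c.orderTop) (h : E b = E c) : b = c := by
  have hnc : 0 < (-c).orderTop := by rwa [orderTop_neg]
  have hbc : 0 < (b + -c).orderTop := posOrderTop_add hb hnc
  have h1 : E (b + -c) * E c = E c := by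
    rw [← E_mul hbc hc, add_assoc, neg_add_cancel, add_zero, h]
  have h2 : E (b + -c) = 1 := by
    have := mul_right_cancel₀ (E_ne_zero hc) (by rw [h1, one_mul] : E (b + -c) * E c = 1 * E c)
    exact this
  have := eq_zero_of_E_eq_one hbc h2
  linear_combination this

lemma single_add0 (r s : ℝ) :
    HahnSeries.single (0:ℝ) (r + s) = HahnSeries.single (0:ℝ) r + HahnSeries.single (0:ℝ) s := by
  ext g
  rcases eq_or_ne g 0 with rfl | hg
  · simp [coeff_single_same, HahnSeries.coeff_add]
  · simp [coeff_single_of_ne hg, HahnSeries.coeff_add]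


theorem stmt_10 :
    -- for `a ∈ O`, the nonconstant part of `a` lies in the maximal ideal
    (∀ a : HahnSeries ℝ ℝ, 0 ≤ a.orderTop →
      0 < (a - HahnSeries.single (0 : ℝ) (a.coeff 0)).orderTop) ∧
    -- `expO` is additive-to-multiplicative on `O`
    (∀ a b : HahnSeries ℝ ℝ, 0 ≤ a.orderTop → 0 ≤ b.orderTop →
      expO (a + b) = expO a * expO b) ∧
    -- `expO` is injective on `O`
    (∀ a b : HahnSeries ℝ ℝ, 0 ≤ a.orderTop → 0 ≤ b.orderTop →
      expO a = expO b → a = b) ∧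
    -- the image of `O` under `expO` is exactly the group `U⁺` of positive units
    (∀ x : HahnSeries ℝ ℝ,
      (∃ a : HahnSeries ℝ ℝ, 0 ≤ a.orderTop ∧ expO a = x) ↔
        (x ≠ 0 ∧ x.order = 0 ∧ 0 < x.leadingCoeff)) := by
  have part1 : ∀ a : HahnSeries ℝ ℝ, 0 ≤ a.orderTop →
      0 < (a - HahnSeries.single (0 : ℝ) (a.coeff 0)).orderTop := by
    intro a ha
    apply posOrderTop_of_coeff
    intro g hg
    rcases hg.lt_or_eq with h | rfl
    · rw [HahnSeries.coeff_sub, coeff_single_of_ne (ne_of_lt h),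
        coeff_of_nonnegOrderTop ha h, sub_zero]
    · rw [HahnSeries.coeff_sub, coeff_single_same, sub_self]
  have part2 : ∀ a b : HahnSeries ℝ ℝ, 0 ≤ a.orderTop → 0 ≤ b.orderTop →
      expO (a + b) = expO a * expO b := by
    intro a b ha hb
    have hA := part1 a ha
    have hB := part1 b hb
    have h0 : (a + b).coeff 0 = a.coeff 0 + b.coeff 0 := HahnSeries.coeff_add
    have hsplit : (a + b) - HahnSeries.single (0:ℝ) ((a+b).coeff 0)
        = (a - HahnSeries.single (0:ℝ) (a.coeff 0)) + (b - HahnSeries.single (0:ℝ) (b.coeff 0)) := by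
      rw [h0, single_add0]; ring
    have hss : HahnSeries.single (0:ℝ) (Real.exp (a.coeff 0)) *
        HahnSeries.single (0:ℝ) (Real.exp (b.coeff 0))
        = HahnSeries.single (0:ℝ) (Real.exp (a.coeff 0) * Real.exp (b.coeff 0)) := by
      rw [single_mul_single, zero_add]
    rw [expO, expO, expO, hsplit, E_mul hA hB, h0, Real.exp_add, ← hss]
    ring
  have coeff0 : ∀ a : HahnSeries ℝ ℝ, 0 ≤ a.orderTop →
      (expO a).coeff 0 = Real.exp (a.coeff 0) := by
    intro a ha
    rw [expO, single_zero_mul_eq_smul, HahnSeries.coeff_smul, E_coeff_zero (part1 a ha),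
      smul_eq_mul, mul_one]
  have part3 : ∀ a b : HahnSeries ℝ ℝ, 0 ≤ a.orderTop → 0 ≤ b.orderTop →
      expO a = expO b → a = b := by
    intro a b ha hb h
    have hexp : Real.exp (a.coeff 0) = Real.exp (b.coeff 0) := by
      rw [← coeff0 a ha, ← coeff0 b hb, h]
    have h00 : a.coeff 0 = b.coeff 0 := Real.exp_injective hexp
    have hE : E (a - HahnSeries.single (0:ℝ) (a.coeff 0))
        = E (b - HahnSeries.single (0:ℝ) (a.coeff 0)) := by
      have h' : HahnSeries.single (0:ℝ) (Real.exp (a.coeff 0)) *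
          E (a - HahnSeries.single (0:ℝ) (a.coeff 0))
          = HahnSeries.single (0:ℝ) (Real.exp (b.coeff 0)) *
            E (b - HahnSeries.single (0:ℝ) (b.coeff 0)) := h
      rw [← h00] at h'
      exact mul_left_cancel₀ (single_ne_zero (Real.exp_ne_zero _)) h'
    have hBa : 0 < (b - HahnSeries.single (0:ℝ) (a.coeff 0)).orderTop := by
      rw [h00]; exact part1 b hb
    exact sub_left_inj.mp (E_inj (part1 a ha) hBa hE)
  refine ⟨part1, part2, part3, ?_⟩
  intro x
  constructor
  · rintro ⟨a, ha, rfl⟩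
    set c := Real.exp (a.coeff 0) with hc
    have hcpos : 0 < c := Real.exp_pos _
    have hA := part1 a ha
    have hcoeff : ∀ g : ℝ, (expO a).coeff g = c * (E (a - HahnSeries.single (0:ℝ) (a.coeff 0))).coeff g := by
      intro g
      rw [expO, single_zero_mul_eq_smul, HahnSeries.coeff_smul, smul_eq_mul]
    have h0 : (expO a).coeff 0 = c := by rw [hcoeff, E_coeff_zero hA, mul_one]
    have hneg : ∀ g : ℝ, g < 0 → (expO a).coeff g = 0 := by
      intro g hg
      rw [hcoeff, E_coeff_nonpos hA (le_of_lt hg), HahnSeries.coeff_one,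
        if_neg (ne_of_lt hg), mul_zero]
    have hx0 : expO a ≠ 0 := ne_zero_of_coeff_ne_zero (h0 ▸ ne_of_gt hcpos)
    have horder : (expO a).order = 0 := by
      apply le_antisymm
      · exact order_le_of_coeff_ne_zero (h0 ▸ ne_of_gt hcpos)
      · by_contra hlt
        push_neg at hlt
        exact coeff_order_ne_zero hx0 (hneg _ hlt)
    refine ⟨hx0, horder, ?_⟩
    rw [leadingCoeff_eq, horder, h0]
    exact hcpos
  · rintro ⟨hx0, hord, hlc⟩
    set c := x.coeff 0 with hc
    have hcpos : 0 < c := by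
      rw [leadingCoeff_eq, hord] at hlc
      exact hlc
    have hcne : c ≠ 0 := ne_of_gt hcpos
    set u := c⁻¹ • x - 1 with hu_def
    have hu : 0 < u.orderTop := by
      apply posOrderTop_of_coeff
      intro g hg
      rcases hg.lt_or_eq with h | rfl
      · rw [hu_def, HahnSeries.coeff_sub, HahnSeries.coeff_smul, HahnSeries.coeff_one,
          if_neg (ne_of_lt h), coeff_eq_zero_of_lt_order (hord ▸ h), smul_zero, sub_zero]
      · rw [hu_def, HahnSeries.coeff_sub, HahnSeries.coeff_smul, HahnSeries.coeff_one,
          if_pos rfl, ← hc, smul_eq_mul, inv_mul_cancel₀ hcne, sub_self]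
    have hb := LogF_pos hu
    refine ⟨HahnSeries.single (0:ℝ) (Real.log c) + LogF u hu, ?_, ?_⟩
    · apply nonnegOrderTop_of_coeff
      intro g hg
      rw [HahnSeries.coeff_add, coeff_single_of_ne (ne_of_lt hg),
        coeff_of_posOrderTop hb (le_of_lt hg), add_zero]
    · have ha0 : (HahnSeries.single (0:ℝ) (Real.log c) + LogF u hu).coeff 0 = Real.log c := by
        rw [HahnSeries.coeff_add, coeff_single_same, coeff_of_posOrderTop hb le_rfl, add_zero]
      rw [expO, ha0, Real.exp_log hcpos]
      have hsub : (HahnSeries.single (0:ℝ) (Real.log c) + LogF u hu)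
          - HahnSeries.single (0:ℝ) (Real.log c) = LogF u hu := by ring
      rw [hsub, E_LogF hu, single_zero_mul_eq_smul]
      have h1u : (1 : F) + u = c⁻¹ • x := by rw [hu_def]; ring
      rw [h1u, smul_smul, mul_inv_cancel₀ hcne, one_smul]

end ExpAux
end

section
/- In the Hahn series field F = HahnSeries ℝ ℝ, fix a ∈ F⁺ = {x : x ≠ 0, 0 < leadingCoeff x} with a ≠ 1. Then the map ϱ_a : ℝ → F⁺ given by γ ↦ tp a γ is an injective group homomorphism from the additive group ℝ into the multiplicative group F⁺: tp a (γ + γ') = (tp a γ)·(tp a γ') for all γ, γ' ∈ ℝ, and tp a γ = tp a γ' implies γ = γ'. -/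
open HahnSeries

/-- The logarithm on positive units: the inverse of the bijection `expO : O → U⁺`. -/
noncomputable def logO (x : HahnSeries ℝ ℝ) : HahnSeries ℝ ℝ :=
  Function.invFunOn expO {a : HahnSeries ℝ ℝ | 0 ≤ a.orderTop} x

/-- The power `b ^ c = expO (c · logO b)` for `b ∈ U⁺` and `c ∈ O`. -/
noncomputable def hpow (b c : HahnSeries ℝ ℝ) : HahnSeries ℝ ℝ :=
  expO (c * logO b)

/-- Membership in the group `U⁺` of positive units of the valuation ring. -/
def memUplus (x : HahnSeries ℝ ℝ) : Prop :=
  x ≠ 0 ∧ x.order = 0 ∧ 0 < x.leadingCoeff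

/-- The signed valuation on the Hahn series field `HahnSeries ℝ ℝ`. -/
noncomputable def vv (x : HahnSeries ℝ ℝ) : ℝ :=
  Real.sign x.leadingCoeff * Real.exp (-x.order)

/-- The diagonal cross-section `π : ℝ^× → HahnSeries ℝ ℝ`. -/
noncomputable def diagPi (a : ℝ) : HahnSeries ℝ ℝ :=
  HahnSeries.single (-Real.log |a|) a

/-- The tempered power `a^γ = π((vv a)^γ) · (a / π(vv a))^{single 0 γ}`, for `a ∈ F⁺`
and `γ ∈ ℝ`, where `(vv a)^γ` is the real power `Real.rpow`. -/
noncomputable def tp (a : HahnSeries ℝ ℝ) (γ : ℝ) : HahnSeries ℝ ℝ :=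
  diagPi ((vv a) ^ γ) * hpow (a / diagPi (vv a)) (HahnSeries.single (0 : ℝ) γ)


namespace StmtAux

open HahnSeries PowerSeries Finset

lemma orderTop_nonneg_of_coeff {x : HahnSeries ℝ ℝ} (h : ∀ g < (0:ℝ), x.coeff g = 0) :
    0 ≤ x.orderTop := by
  rcases eq_or_ne x 0 with rfl | hx
  · simp
  · rw [zero_le_orderTop_iff]
    by_contra hlt
    push_neg at hlt
    exact (mt coeff_order_eq_zero.mp hx) (h _ hlt)

lemma orderTop_pos_of_coeff {x : HahnSeries ℝ ℝ} (h : ∀ g ≤ (0:ℝ), x.coeff g = 0) :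
    0 < x.orderTop := by
  rcases eq_or_ne x 0 with rfl | hx
  · simp
  · rw [zero_lt_orderTop_iff hx]
    by_contra hlt
    push_neg at hlt
    exact (mt coeff_order_eq_zero.mp hx) (h _ hlt)

lemma coeff_eq_zero_of_orderTop_nonneg {x : HahnSeries ℝ ℝ} (h : 0 ≤ x.orderTop)
    {g : ℝ} (hg : g < 0) : x.coeff g = 0 := by
  refine coeff_eq_zero_of_lt_orderTop (lt_of_lt_of_le ?_ h)
  exact_mod_cast hg

lemma coeff_eq_zero_of_orderTop_pos {x : HahnSeries ℝ ℝ} (h : 0 < x.orderTop)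
    {g : ℝ} (hg : g ≤ 0) : x.coeff g = 0 := by
  refine coeff_eq_zero_of_lt_orderTop (lt_of_le_of_lt ?_ h)
  exact_mod_cast hg

lemma orderTop_pow_nonneg {x : HahnSeries ℝ ℝ} (h : 0 ≤ x.orderTop) (n : ℕ) :
    0 ≤ (x ^ n).orderTop := by
  induction n with
  | zero => simp [pow_zero, orderTop_one]
  | succ n ih =>
      rw [pow_succ]
      calc (0 : WithTop ℝ) = 0 + 0 := by simp
      _ ≤ (x ^ n).orderTop + x.orderTop := add_le_add ih h
      _ ≤ ((x ^ n) * x).orderTop := orderTop_add_le_mul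

lemma le_orderTop_pow {x : HahnSeries ℝ ℝ} (h : 0 < x.orderTop) (n : ℕ) :
    x.orderTop ≤ (x ^ (n + 1)).orderTop := by
  calc x.orderTop = 0 + x.orderTop := by simp
  _ ≤ (x ^ n).orderTop + x.orderTop := add_le_add (orderTop_pow_nonneg h.le n) le_rfl
  _ ≤ ((x ^ n) * x).orderTop := orderTop_add_le_mul
  _ = (x ^ (n+1)).orderTop := by rw [← pow_succ]

lemma orderTop_pow_pos {x : HahnSeries ℝ ℝ} (h : 0 < x.orderTop) (n : ℕ) :
    0 < (x ^ (n + 1)).orderTop := lt_of_lt_of_le h (le_orderTop_pow h n)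

/-- The summable family `n ↦ (coeff n f) • tⁿ`. -/
noncomputable def psFam (t : HahnSeries ℝ ℝ) (ht : 0 < t.orderTop) (f : PowerSeries ℝ) :
    SummableFamily ℝ ℝ ℕ where
  toFun n := (PowerSeries.coeff n f) • t ^ n
  isPWO_iUnion_support' := by
    refine (SummableFamily.powers t).isPWO_iUnion_support.mono ?_
    intro g hg
    obtain ⟨n, hn⟩ := Set.mem_iUnion.mp hg
    refine Set.mem_iUnion.mpr ⟨n, ?_⟩
    have hn' : ((PowerSeries.coeff n f) • t ^ n).coeff g ≠ 0 := hn
    have hbn : (t ^ n).coeff g ≠ 0 := fun h => hn' (by rw [HahnSeries.coeff_smul, h, smul_zero])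
    simpa [SummableFamily.coe_powers ht, ht] using hbn
  finite_co_support' g := by
    refine ((SummableFamily.powers t).finite_co_support g).subset ?_
    intro n hn
    simp only [Set.mem_setOf_eq] at hn ⊢
    intro h
    apply hn
    rw [HahnSeries.coeff_smul]
    have h' : (t ^ n).coeff g = 0 := by simpa [SummableFamily.coe_powers ht, ht] using h
    rw [h', smul_zero]

@[simp] lemma psFam_apply {t : HahnSeries ℝ ℝ} (ht : 0 < t.orderTop) (f : PowerSeries ℝ)
    (n : ℕ) : psFam t ht f n = (PowerSeries.coeff n f) • t ^ n := rfl

/-- Evaluation of a power series at a Hahn series of positive order. -/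
noncomputable def psEval (t : HahnSeries ℝ ℝ) (ht : 0 < t.orderTop) (f : PowerSeries ℝ) :
    HahnSeries ℝ ℝ :=
  (psFam t ht f).hsum

/-- A bound on the indices `n` for which `tⁿ` can have a nonzero coefficient at `g`. -/
noncomputable def powBound (t : HahnSeries ℝ ℝ) (ht : 0 < t.orderTop) (g : ℝ) : ℕ :=
  ((SummableFamily.powers t).finite_co_support g).toFinset.sup id

lemma le_powBound {t : HahnSeries ℝ ℝ} (ht : 0 < t.orderTop) {g : ℝ} {m : ℕ}
    (hm : (t ^ m).coeff g ≠ 0) : m ≤ powBound t ht g := by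
  refine Finset.le_sup (f := id) ?_
  simp only [Set.Finite.mem_toFinset, Set.mem_setOf_eq, SummableFamily.coe_powers ht]
  simpa [SummableFamily.coe_powers ht] using hm

end StmtAux

namespace StmtAux

open HahnSeries PowerSeries Finset

lemma psEval_coeff_eq_sum {t : HahnSeries ℝ ℝ} (ht : 0 < t.orderTop) (f : PowerSeries ℝ)
    {g : ℝ} {P : Finset ℕ} (hP : ∀ m, (t ^ m).coeff g ≠ 0 → m ∈ P) :
    (psEval t ht f).coeff g = ∑ n ∈ P, (PowerSeries.coeff n f) * (t ^ n).coeff g := by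
  rw [psEval, SummableFamily.coeff_hsum_eq_sum_of_subset (t := P)]
  · simp [smul_eq_mul]
  · intro n hn
    simp only [psFam_apply, HahnSeries.coeff_smul, smul_eq_mul, Set.mem_setOf_eq] at hn
    exact hP n fun h => hn (by rw [h, mul_zero])

lemma psEval_one {t : HahnSeries ℝ ℝ} (ht : 0 < t.orderTop) :
    psEval t ht 1 = 1 := by
  ext g
  rw [psEval_coeff_eq_sum ht 1
    (P := Finset.range (powBound t ht g + 2))
    (fun m hm => Finset.mem_range.mpr (lt_of_le_of_lt (le_powBound ht hm) (by omega)))]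
  rw [Finset.sum_eq_single_of_mem 0 (by simp)]
  · simp
  · intro n _ hn
    simp [PowerSeries.coeff_one, hn]

lemma psEval_X {t : HahnSeries ℝ ℝ} (ht : 0 < t.orderTop) :
    psEval t ht X = t := by
  ext g
  rw [psEval_coeff_eq_sum ht X
    (P := Finset.range (powBound t ht g + 2))
    (fun m hm => Finset.mem_range.mpr (lt_of_le_of_lt (le_powBound ht hm) (by omega)))]
  rw [Finset.sum_eq_single_of_mem 1 (by simp [Nat.lt_add_of_pos_left])]
  · simp
  · intro n _ hn
    simp [PowerSeries.coeff_X, hn]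

lemma psEval_add {t : HahnSeries ℝ ℝ} (ht : 0 < t.orderTop) (f g : PowerSeries ℝ) :
    psEval t ht (f + g) = psEval t ht f + psEval t ht g := by
  rw [psEval, psEval, psEval, ← SummableFamily.hsum_add]
  congr 1
  refine SummableFamily.ext fun n => ?_
  rw [SummableFamily.add_apply, psFam_apply, psFam_apply, psFam_apply, map_add]
  ext g
  simp [HahnSeries.coeff_smul, add_mul]

lemma psEval_mul {t : HahnSeries ℝ ℝ} (ht : 0 < t.orderTop) (f g : PowerSeries ℝ) :
    psEval t ht (f * g) = psEval t ht f * psEval t ht g := by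
  classical
  have hfam : ∀ p : ℕ × ℕ,
      (SummableFamily.smul (psFam t ht f) (psFam t ht g)) p
      = (PowerSeries.coeff p.1 f * PowerSeries.coeff p.2 g) • t ^ (p.1 + p.2) := by
    intro p
    show (HahnModule.of ℝ).symm ((psFam t ht f p.1) • HahnModule.of ℝ (psFam t ht g p.2)) = _
    rw [HahnSeries.of_symm_smul_of_eq_mul]
    simp only [psFam_apply]
    rw [← HahnSeries.single_zero_mul_eq_smul, ← HahnSeries.single_zero_mul_eq_smul,
      ← HahnSeries.single_zero_mul_eq_smul]
    have hre : (HahnSeries.single (0:ℝ) (PowerSeries.coeff p.1 f) * t ^ p.1) *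
        (HahnSeries.single (0:ℝ) (PowerSeries.coeff p.2 g) * t ^ p.2)
        = (HahnSeries.single (0:ℝ) (PowerSeries.coeff p.1 f) *
           HahnSeries.single (0:ℝ) (PowerSeries.coeff p.2 g)) * (t ^ p.1 * t ^ p.2) := by
      ring
    rw [hre, HahnSeries.single_mul_single, add_zero, ← _root_.pow_add]
  have hprod : psEval t ht f * psEval t ht g
      = (SummableFamily.smul (psFam t ht f) (psFam t ht g)).hsum := by
    rw [SummableFamily.smul_hsum, HahnSeries.of_symm_smul_of_eq_mul]
    rfl
  ext γ
  set B := powBound t ht γ with hBdef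
  have hB : ∀ m, (t ^ m).coeff γ ≠ 0 → m ≤ B := fun m hm => le_powBound ht hm
  set S : Finset (ℕ × ℕ) := Finset.range (B+1) ×ˢ Finset.range (B+1) with hSdef
  have hRHS : (psEval t ht f * psEval t ht g).coeff γ
      = ∑ p ∈ S, (PowerSeries.coeff p.1 f * PowerSeries.coeff p.2 g) * (t ^ (p.1 + p.2)).coeff γ := by
    rw [hprod, SummableFamily.coeff_hsum_eq_sum_of_subset (t := S)]
    · exact Finset.sum_congr rfl fun p _ => by rw [hfam]; simp [smul_eq_mul]
    · intro p hp
      simp only [Set.mem_setOf_eq, hfam, HahnSeries.coeff_smul, smul_eq_mul] at hp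
      have htp : (t ^ (p.1 + p.2)).coeff γ ≠ 0 := fun h => hp (by rw [h, mul_zero])
      have hple := hB _ htp
      have : p ∈ Finset.range (B+1) ×ˢ Finset.range (B+1) :=
        Finset.mem_product.mpr ⟨Finset.mem_range.mpr (by omega), Finset.mem_range.mpr (by omega)⟩
      simpa [hSdef] using this
  set D : Finset (ℕ × ℕ) := (Finset.range (B+1)).biUnion (fun n => Finset.HasAntidiagonal.antidiagonal n)
    with hDdef
  have hmemD : ∀ p : ℕ × ℕ, p ∈ D ↔ p.1 + p.2 ≤ B := by
    intro p
    simp only [hDdef, Finset.mem_biUnion, Finset.mem_range, Finset.HasAntidiagonal.mem_antidiagonal]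
    constructor
    · rintro ⟨n, hn, rfl⟩; omega
    · intro h; exact ⟨p.1 + p.2, by omega, rfl⟩
  have hLHS : (psEval t ht (f * g)).coeff γ
      = ∑ p ∈ D, (PowerSeries.coeff p.1 f * PowerSeries.coeff p.2 g) * (t ^ (p.1 + p.2)).coeff γ := by
    rw [psEval_coeff_eq_sum ht (f * g) (P := Finset.range (B+1))
      (fun m hm => Finset.mem_range.mpr (lt_of_le_of_lt (hB m hm) (by omega)))]
    rw [hDdef, Finset.sum_biUnion]
    · refine Finset.sum_congr rfl fun n _ => ?_
      rw [PowerSeries.coeff_mul, Finset.sum_mul]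
      refine Finset.sum_congr rfl fun p hp => ?_
      rw [Finset.HasAntidiagonal.mem_antidiagonal.mp hp]
    · intro i _ j _ hij
      simp only [Function.onFun]
      refine Finset.disjoint_left.mpr fun p hpi hpj => hij ?_
      rw [← Finset.HasAntidiagonal.mem_antidiagonal.mp hpi, ← Finset.HasAntidiagonal.mem_antidiagonal.mp hpj]
  rw [hLHS, hRHS]
  refine Finset.sum_subset ?_ ?_
  · intro p hp
    rw [hmemD] at hp
    have : p ∈ Finset.range (B+1) ×ˢ Finset.range (B+1) :=
      Finset.mem_product.mpr ⟨Finset.mem_range.mpr (by omega), Finset.mem_range.mpr (by omega)⟩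
    simpa [hSdef] using this
  · intro p _ hp
    rw [hmemD] at hp
    have : (t ^ (p.1 + p.2)).coeff γ = 0 := by
      by_contra h
      exact hp (hB _ h)
    rw [this, mul_zero]

lemma psEval_pow {t : HahnSeries ℝ ℝ} (ht : 0 < t.orderTop) (f : PowerSeries ℝ) (n : ℕ) :
    psEval t ht (f ^ n) = (psEval t ht f) ^ n := by
  induction n with
  | zero => simpa using psEval_one ht
  | succ n ih => rw [pow_succ, pow_succ, psEval_mul, ih]

lemma orderTop_psEval_pos {t : HahnSeries ℝ ℝ} (ht : 0 < t.orderTop) {f : PowerSeries ℝ}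
    (hf : PowerSeries.constantCoeff f = 0) : 0 < (psEval t ht f).orderTop := by
  refine orderTop_pos_of_coeff fun g hg => ?_
  rw [psEval_coeff_eq_sum ht f (P := Finset.range (powBound t ht g + 1))
    (fun m hm => Finset.mem_range.mpr (lt_of_le_of_lt (le_powBound ht hm) (by omega)))]
  refine Finset.sum_eq_zero fun n _ => ?_
  rcases Nat.eq_zero_or_pos n with rfl | hn
  · simp [← PowerSeries.coeff_zero_eq_constantCoeff_apply, hf]
  · obtain ⟨m, rfl⟩ := Nat.exists_eq_add_of_lt hn
    rw [coeff_eq_zero_of_orderTop_pos (orderTop_pow_pos ht _) hg, mul_zero]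

end StmtAux

namespace StmtAux

open HahnSeries PowerSeries Finset

lemma E_eq_psEval {b : HahnSeries ℝ ℝ} (hb : 0 < b.orderTop) :
    E b = psEval b hb (PowerSeries.exp ℝ) := by
  rw [E, dif_pos hb, psEval]
  congr 1
  refine SummableFamily.ext fun n => ?_
  show ((n.factorial : ℝ))⁻¹ • b ^ n = (PowerSeries.coeff n (PowerSeries.exp ℝ)) • b ^ n
  rw [PowerSeries.coeff_exp]
  norm_num [eq_ratCast, one_div]

lemma E_coeff_nonpos {b : HahnSeries ℝ ℝ} (hb : 0 < b.orderTop) {g : ℝ} (hg : g ≤ 0) :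
    (E b).coeff g = (1 : HahnSeries ℝ ℝ).coeff g := by
  rw [E, dif_pos hb, SummableFamily.coeff_hsum_eq_sum_of_subset (t := {0})]
  · rw [Finset.sum_singleton]
    show ((((0:ℕ).factorial : ℝ))⁻¹ • b ^ 0).coeff g = _
    simp
  · intro n hn
    simp only [Set.mem_setOf_eq] at hn
    rcases Nat.eq_zero_or_pos n with rfl | hpos
    · simp
    · exfalso
      apply hn
      show (((n.factorial : ℝ))⁻¹ • b ^ n).coeff g = 0
      obtain ⟨m, rfl⟩ := Nat.exists_eq_add_of_lt hpos
      rw [HahnSeries.coeff_smul, coeff_eq_zero_of_orderTop_pos (orderTop_pow_pos hb _) hg,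
        smul_zero]

lemma E_coeff_zero {b : HahnSeries ℝ ℝ} (hb : 0 < b.orderTop) : (E b).coeff 0 = 1 := by
  rw [E_coeff_nonpos hb le_rfl]
  simp

lemma E_coeff_neg {b : HahnSeries ℝ ℝ} (hb : 0 < b.orderTop) {g : ℝ} (hg : g < 0) :
    (E b).coeff g = 0 := by
  rw [E_coeff_nonpos hb hg.le]
  rw [HahnSeries.coeff_one, if_neg hg.ne]

lemma E_zero : E (0 : HahnSeries ℝ ℝ) = 1 := by
  have h : (0 : WithTop ℝ) < (0 : HahnSeries ℝ ℝ).orderTop := by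
    rw [HahnSeries.orderTop_zero]; exact WithTop.coe_lt_top 0
  rw [E, dif_pos h]
  ext g
  rw [SummableFamily.coeff_hsum_eq_sum_of_subset (t := {0})]
  · rw [Finset.sum_singleton]
    show ((((0:ℕ).factorial : ℝ))⁻¹ • (0 : HahnSeries ℝ ℝ) ^ 0).coeff g = _
    simp
  · intro n hn
    simp only [Set.mem_setOf_eq] at hn
    rcases Nat.eq_zero_or_pos n with rfl | hpos
    · simp
    · exfalso
      apply hn
      show (((n.factorial : ℝ))⁻¹ • (0 : HahnSeries ℝ ℝ) ^ n).coeff g = 0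
      rw [zero_pow hpos.ne', smul_zero, HahnSeries.coeff_zero]

lemma order_leadingCoeff_of_coeff {x : HahnSeries ℝ ℝ} (h0 : x.coeff 0 ≠ 0)
    (hneg : ∀ g < (0:ℝ), x.coeff g = 0) :
    x ≠ 0 ∧ x.order = 0 ∧ x.leadingCoeff = x.coeff 0 := by
  have hx : x ≠ 0 := fun h => h0 (by simp [h])
  have horder : x.order = 0 := by
    refine le_antisymm (order_le_of_coeff_ne_zero h0) ?_
    by_contra hlt
    push_neg at hlt
    exact (mt coeff_order_eq_zero.mp hx) (hneg _ hlt)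
  exact ⟨hx, horder, by rw [leadingCoeff_eq, horder]⟩

lemma orderTop_sub_single_pos {w : HahnSeries ℝ ℝ} (hw : 0 ≤ w.orderTop) :
    0 < (w - HahnSeries.single (0 : ℝ) (w.coeff 0)).orderTop := by
  refine orderTop_pos_of_coeff fun g hg => ?_
  rw [HahnSeries.coeff_sub]
  rcases eq_or_lt_of_le hg with rfl | hlt
  · simp
  · rw [coeff_eq_zero_of_orderTop_nonneg hw hlt, HahnSeries.coeff_single_of_ne hlt.ne, sub_zero]

lemma expO_coeff_zero {w : HahnSeries ℝ ℝ} (hw : 0 ≤ w.orderTop) :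
    (expO w).coeff 0 = Real.exp (w.coeff 0) := by
  rw [expO, HahnSeries.coeff_single_zero_mul, E_coeff_zero (orderTop_sub_single_pos hw), mul_one]

lemma expO_coeff_neg {w : HahnSeries ℝ ℝ} (hw : 0 ≤ w.orderTop) {g : ℝ} (hg : g < 0) :
    (expO w).coeff g = 0 := by
  rw [expO, HahnSeries.coeff_single_zero_mul, E_coeff_neg (orderTop_sub_single_pos hw) hg,
    mul_zero]

lemma memUplus_expO {w : HahnSeries ℝ ℝ} (hw : 0 ≤ w.orderTop) : memUplus (expO w) := by
  have h0 : (expO w).coeff 0 ≠ 0 := by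
    rw [expO_coeff_zero hw]; exact (Real.exp_pos _).ne'
  obtain ⟨hne, hord, hlc⟩ := order_leadingCoeff_of_coeff h0
    (fun g hg => expO_coeff_neg hw hg)
  exact ⟨hne, hord, by rw [hlc, expO_coeff_zero hw]; exact Real.exp_pos _⟩

lemma expO_zero : expO (0 : HahnSeries ℝ ℝ) = 1 := by
  rw [expO]
  simp only [HahnSeries.coeff_zero, Real.exp_zero, HahnSeries.single_eq_zero, sub_zero]
  rw [E_zero, HahnSeries.single_zero_one, one_mul]

lemma coe_lt_add_of_pos {r : ℝ} {x : WithTop ℝ} (hx : 0 < x) :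
    (r : WithTop ℝ) < x + r := by
  cases x with
  | top => rw [top_add]; exact WithTop.coe_lt_top r
  | coe q =>
      rw [← WithTop.coe_add, WithTop.coe_lt_coe]
      have : (0:ℝ) < q := by exact_mod_cast hx
      linarith

lemma coe_lt_add_of_pos' {r : ℝ} {x : WithTop ℝ} (hx : 0 < x) :
    (r : WithTop ℝ) < r + x := by
  rw [add_comm]; exact coe_lt_add_of_pos hx

lemma E_inj {b b' : HahnSeries ℝ ℝ} (hb : 0 < b.orderTop) (hb' : 0 < b'.orderTop)
    (h : E b = E b') : b = b' := by
  by_contra hne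
  have hδ : b - b' ≠ 0 := sub_ne_zero_of_ne hne
  set o : ℝ := (b - b').order with ho
  have hoT : ((o : ℝ) : WithTop ℝ) = (b - b').orderTop := by
    rw [ho]; exact order_eq_orderTop_of_ne_zero hδ
  -- key orderTop estimates
  have key : ∀ n : ℕ, (o : WithTop ℝ) ≤ (b ^ (n+1) - b' ^ (n+1)).orderTop ∧
      (1 ≤ n → (o : WithTop ℝ) < (b ^ (n+1) - b' ^ (n+1)).orderTop) := by
    intro n
    induction n with
    | zero => exact ⟨by rw [pow_one, pow_one, hoT], fun h => absurd h (by omega)⟩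
    | succ n ih =>
        have hid : b ^ (n+2) - b' ^ (n+2)
            = b * (b ^ (n+1) - b' ^ (n+1)) + (b - b') * b' ^ (n+1) := by ring
        have h1 : (o : WithTop ℝ) < (b * (b ^ (n+1) - b' ^ (n+1))).orderTop := by
          calc (o : WithTop ℝ) < b.orderTop + o := coe_lt_add_of_pos hb
          _ ≤ b.orderTop + (b ^ (n+1) - b' ^ (n+1)).orderTop := add_le_add le_rfl ih.1
          _ ≤ _ := orderTop_add_le_mul
        have h2 : (o : WithTop ℝ) < ((b - b') * b' ^ (n+1)).orderTop := by
          calc (o : WithTop ℝ) < (o : WithTop ℝ) + (b' ^ (n+1)).orderTop :=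
            coe_lt_add_of_pos' (orderTop_pow_pos hb' n)
          _ = (b - b').orderTop + (b' ^ (n+1)).orderTop := by rw [hoT]
          _ ≤ _ := orderTop_add_le_mul
        have hlt : (o : WithTop ℝ) < (b ^ (n+2) - b' ^ (n+2)).orderTop := by
          rw [hid]
          exact lt_of_lt_of_le (lt_min h1 h2) min_orderTop_le_orderTop_add
        exact ⟨hlt.le, fun _ => hlt⟩
  -- compute the coefficient of E b - E b' at o
  have hcoeff : (E b - E b').coeff o = (b - b').coeff o := by
    rw [E, dif_pos hb, E, dif_pos hb', ← SummableFamily.hsum_sub,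
      SummableFamily.coeff_hsum_eq_sum_of_subset (t := {1})]
    · rw [Finset.sum_singleton, SummableFamily.sub_apply]
      show ((((1:ℕ).factorial : ℝ))⁻¹ • b ^ 1 - (((1:ℕ).factorial : ℝ))⁻¹ • b' ^ 1).coeff o = _
      simp [HahnSeries.coeff_sub]
    · intro n hn
      simp only [Set.mem_setOf_eq, SummableFamily.sub_apply] at hn
      have hval : (expFamily b hb n - expFamily b' hb' n)
          = ((n.factorial : ℝ))⁻¹ • (b ^ n - b' ^ n) := by
        show ((n.factorial : ℝ))⁻¹ • b ^ n - ((n.factorial : ℝ))⁻¹ • b' ^ n = _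
        rw [smul_sub]
      rw [hval] at hn
      match n with
      | 0 => exact absurd (by simp) hn
      | 1 => simp
      | (n+2) =>
          exfalso
          apply hn
          rw [HahnSeries.coeff_smul,
            coeff_eq_zero_of_lt_orderTop ((key (n+1)).2 (by omega)), smul_zero]
  rw [h, sub_self] at hcoeff
  exact (mt coeff_order_eq_zero.mp hδ) (by rw [← ho, ← hcoeff]; simp)


end StmtAux

namespace StmtAux
open HahnSeries PowerSeries Finset

lemma expO_inj {w w' : HahnSeries ℝ ℝ} (hw : 0 ≤ w.orderTop) (hw' : 0 ≤ w'.orderTop)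
    (h : expO w = expO w') : w = w' := by
  have hc : w.coeff 0 = w'.coeff 0 := by
    have h0 := congrArg (fun x => HahnSeries.coeff x 0) h
    simp only [expO_coeff_zero hw, expO_coeff_zero hw'] at h0
    exact Real.exp_injective h0
  have hs : HahnSeries.single (0:ℝ) (Real.exp (w.coeff 0)) ≠ 0 :=
    HahnSeries.single_ne_zero (Real.exp_pos _).ne'
  have h' : HahnSeries.single (0:ℝ) (Real.exp (w.coeff 0)) * E (w - HahnSeries.single (0:ℝ) (w.coeff 0))
      = HahnSeries.single (0:ℝ) (Real.exp (w.coeff 0)) * E (w' - HahnSeries.single (0:ℝ) (w.coeff 0)) := by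
    rw [expO, expO] at h
    rw [← hc] at h
    exact h
  have hpos' : 0 < (w' - HahnSeries.single (0:ℝ) (w.coeff 0)).orderTop := by
    rw [hc]; exact orderTop_sub_single_pos hw'
  have hsub := E_inj (orderTop_sub_single_pos hw) hpos' (mul_left_cancel₀ hs h')
  exact sub_left_inj.mp hsub

end StmtAux

namespace StmtAux
open HahnSeries PowerSeries Finset

lemma orderTop_smul_nonneg {w : HahnSeries ℝ ℝ} (hw : 0 ≤ w.orderTop) (γ : ℝ) :
    0 ≤ (γ • w).orderTop := by
  refine orderTop_nonneg_of_coeff fun g hg => ?_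
  rw [HahnSeries.coeff_smul, coeff_eq_zero_of_orderTop_nonneg hw hg, smul_zero]

lemma orderTop_smul_pos {t : HahnSeries ℝ ℝ} (ht : 0 < t.orderTop) (γ : ℝ) :
    0 < (γ • t).orderTop := by
  refine orderTop_pos_of_coeff fun g hg => ?_
  rw [HahnSeries.coeff_smul, coeff_eq_zero_of_orderTop_pos ht hg, smul_zero]

lemma smul_pow' (γ : ℝ) (t : HahnSeries ℝ ℝ) (n : ℕ) :
    (γ • t) ^ n = (γ ^ n) • t ^ n := by
  rw [← HahnSeries.single_zero_mul_eq_smul, ← HahnSeries.single_zero_mul_eq_smul,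
    mul_pow, HahnSeries.single_pow, smul_zero]

lemma smul_sub_single (γ : ℝ) (w : HahnSeries ℝ ℝ) :
    γ • w - HahnSeries.single (0:ℝ) ((γ • w).coeff 0)
      = γ • (w - HahnSeries.single (0:ℝ) (w.coeff 0)) := by
  ext g
  simp only [HahnSeries.coeff_sub, HahnSeries.coeff_smul, HahnSeries.coeff_single]
  by_cases hg : g = 0 <;> simp [hg, smul_eq_mul, mul_sub]

lemma E_smul_eq {t : HahnSeries ℝ ℝ} (ht : 0 < t.orderTop) (γ : ℝ) :
    E (γ • t) = psEval t ht (PowerSeries.rescale γ (PowerSeries.exp ℝ)) := by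
  rw [E_eq_psEval (orderTop_smul_pos ht γ), psEval, psEval]
  congr 1
  refine SummableFamily.ext fun n => ?_
  rw [psFam_apply, psFam_apply, PowerSeries.coeff_rescale, smul_pow', smul_smul, mul_comm]

lemma E_smul_add {t : HahnSeries ℝ ℝ} (ht : 0 < t.orderTop) (γ γ' : ℝ) :
    E ((γ + γ') • t) = E (γ • t) * E (γ' • t) := by
  rw [E_smul_eq ht, E_smul_eq ht, E_smul_eq ht, ← psEval_mul,
    PowerSeries.exp_mul_exp_eq_exp_add]

lemma expO_smul {w : HahnSeries ℝ ℝ} (γ : ℝ) :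
    expO (γ • w) = HahnSeries.single (0:ℝ) (Real.exp (γ * w.coeff 0)) *
      E (γ • (w - HahnSeries.single (0:ℝ) (w.coeff 0))) := by
  rw [expO, ← smul_sub_single]
  rw [HahnSeries.coeff_smul, smul_eq_mul]

lemma expO_smul_add {w : HahnSeries ℝ ℝ} (hw : 0 ≤ w.orderTop) (γ γ' : ℝ) :
    expO ((γ + γ') • w) = expO (γ • w) * expO (γ' • w) := by
  rw [expO_smul, expO_smul, expO_smul, E_smul_add (orderTop_sub_single_pos hw)]
  rw [mul_mul_mul_comm, HahnSeries.single_mul_single, add_zero, ← Real.exp_add, add_mul]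

end StmtAux

namespace StmtAux
open HahnSeries PowerSeries Finset

/-- The formal logarithm series `∑ (-1)^(n+1)/n Xⁿ`. -/
noncomputable def Lps : PowerSeries ℝ := PowerSeries.mk fun n => (-1:ℝ)^(n+1) / n

/-- The formal derivative `∑ (-1)^n Xⁿ` of `Lps`. -/
noncomputable def dLps : PowerSeries ℝ := PowerSeries.mk fun n => (-1:ℝ)^n

lemma constantCoeff_Lps : PowerSeries.constantCoeff Lps = 0 := by
  rw [← PowerSeries.coeff_zero_eq_constantCoeff_apply, Lps, PowerSeries.coeff_mk]
  simp

lemma derivative_Lps : PowerSeries.derivative (R := ℝ) Lps = dLps := by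
  ext n
  rw [PowerSeries.coeff_derivative, Lps, dLps, PowerSeries.coeff_mk, PowerSeries.coeff_mk]
  have hn : ((n:ℝ) + 1) ≠ 0 := by positivity
  field_simp
  rw [pow_succ, pow_succ]
  push_cast
  ring

lemma one_add_X_mul_dLps : ((1 : PowerSeries ℝ) + X) * dLps = 1 := by
  ext n
  rw [add_mul, one_mul, map_add]
  cases n with
  | zero =>
      rw [PowerSeries.coeff_zero_X_mul]
      simp [dLps]
  | succ n =>
      rw [PowerSeries.coeff_succ_X_mul]
      simp only [dLps, PowerSeries.coeff_mk, PowerSeries.coeff_one, Nat.succ_ne_zero, if_false]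
      rw [pow_succ]
      ring

lemma coeff_Lps_pow_eq_zero {m n : ℕ} (h : m < n) : PowerSeries.coeff m (Lps ^ n) = 0 := by
  have hdvd : (X : PowerSeries ℝ) ^ n ∣ Lps ^ n :=
    pow_dvd_pow_of_dvd (PowerSeries.X_dvd_iff.mpr constantCoeff_Lps) n
  exact PowerSeries.X_pow_dvd_iff.mp hdvd m h

lemma coeff_Lps_pow_dL_eq_zero {m k : ℕ} (h : m < k) :
    PowerSeries.coeff m (Lps ^ k * dLps) = 0 := by
  have hdvd : (X : PowerSeries ℝ) ^ k ∣ Lps ^ k * dLps :=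
    Dvd.dvd.mul_right (pow_dvd_pow_of_dvd (PowerSeries.X_dvd_iff.mpr constantCoeff_Lps) k) _
  exact PowerSeries.X_pow_dvd_iff.mp hdvd m h

/-- The coefficients of the composite `exp ∘ Lps`. -/
noncomputable def cSeq (m : ℕ) : ℝ :=
  ∑ n ∈ Finset.range (m+1), ((n.factorial : ℝ))⁻¹ * PowerSeries.coeff m (Lps ^ n)

/-- The coefficients of the composite `(exp ∘ Lps) · Lps'`. -/
noncomputable def dSeq (m : ℕ) : ℝ :=
  ∑ k ∈ Finset.range (m+1), ((k.factorial : ℝ))⁻¹ * PowerSeries.coeff m (Lps ^ k * dLps)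

lemma cSeq_zero : cSeq 0 = 1 := by simp [cSeq]

lemma dSeq_zero : dSeq 0 = 1 := by simp [dSeq, dLps]

lemma cSeq_rec (m : ℕ) : ((m:ℝ) + 1) * cSeq (m+1) = dSeq m := by
  have hterm : ∀ n : ℕ, ((m:ℝ)+1) * (((n.factorial : ℝ))⁻¹ * PowerSeries.coeff (m+1) (Lps ^ n))
      = ((n.factorial : ℝ))⁻¹ * ((n:ℝ) * PowerSeries.coeff m (Lps ^ (n-1) * dLps)) := by
    intro n
    have hder : PowerSeries.coeff m (PowerSeries.derivative (R := ℝ) (Lps ^ n))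
        = (n:ℝ) * PowerSeries.coeff m (Lps ^ (n-1) * dLps) := by
      rw [Derivation.leibniz_pow, derivative_Lps, smul_eq_mul, map_nsmul, nsmul_eq_mul]
    rw [← hder, PowerSeries.coeff_derivative]
    push_cast
    ring
  rw [cSeq, Finset.mul_sum]
  rw [Finset.sum_congr rfl (fun n _ => hterm n)]
  rw [Finset.sum_range_succ', dSeq]
  simp only [Nat.cast_zero, zero_mul, mul_zero, add_zero]
  refine Finset.sum_congr rfl fun k _ => ?_
  rw [Nat.add_sub_cancel, Nat.factorial_succ]
  have hk : ((k.factorial : ℝ)) ≠ 0 := by exact_mod_cast k.factorial_ne_zero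
  push_cast
  field_simp

lemma dSeq_rec (m : ℕ) : dSeq (m+1) = cSeq (m+1) - dSeq m := by
  have hterm : ∀ k : ℕ, PowerSeries.coeff (m+1) (Lps ^ k * dLps)
      = PowerSeries.coeff (m+1) (Lps ^ k) - PowerSeries.coeff m (Lps ^ k * dLps) := by
    intro k
    have hid : Lps ^ k = Lps ^ k * dLps + X * (Lps ^ k * dLps) := by
      calc Lps ^ k = Lps ^ k * (((1 : PowerSeries ℝ) + X) * dLps) := by
            rw [one_add_X_mul_dLps, mul_one]
      _ = Lps ^ k * dLps + X * (Lps ^ k * dLps) := by ring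
    have := congrArg (PowerSeries.coeff (m+1)) hid
    rw [map_add, PowerSeries.coeff_succ_X_mul] at this
    linarith
  have h1 : ∑ k ∈ Finset.range (m+1+1), ((k.factorial : ℝ))⁻¹ * PowerSeries.coeff m (Lps ^ k * dLps)
      = dSeq m := by
    rw [Finset.sum_range_succ, dSeq, coeff_Lps_pow_dL_eq_zero (by omega), mul_zero, add_zero]
  rw [dSeq, Finset.sum_congr rfl (fun k _ => by rw [hterm k])]
  simp only [mul_sub]
  rw [Finset.sum_sub_distrib, h1, cSeq]

lemma cSeq_one : cSeq 1 = 1 := by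
  have := cSeq_rec 0
  rw [dSeq_zero] at this
  simpa using this

lemma seq_vanish : ∀ m : ℕ, dSeq (m+1) = 0 ∧ cSeq (m+2) = 0 := by
  intro m
  induction m with
  | zero =>
      have hd1 : dSeq 1 = 0 := by rw [dSeq_rec 0, cSeq_one, dSeq_zero]; ring
      have hc2 : cSeq 2 = 0 := by
        have := cSeq_rec 1
        rw [hd1] at this
        have h2 : ((1:ℝ)+1) ≠ 0 := by norm_num
        field_simp at this
        norm_num at this
        linarith
      exact ⟨hd1, hc2⟩
  | succ m ih =>
      have hd : dSeq (m+2) = 0 := by rw [dSeq_rec (m+1), ih.2, ih.1]; ring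
      have hc : cSeq (m+3) = 0 := by
        have := cSeq_rec (m+2)
        rw [hd] at this
        have hne : ((m:ℝ)+2+1) ≠ 0 := by positivity
        have h3 : (((m+2 : ℕ):ℝ)+1) * cSeq (m+3) = 0 := this
        push_cast at h3
        nlinarith [h3]
      exact ⟨hd, hc⟩

lemma cSeq_eq (m : ℕ) : cSeq m = PowerSeries.coeff m (1 + X) := by
  match m with
  | 0 => rw [cSeq_zero]; simp
  | 1 => rw [cSeq_one]; simp [PowerSeries.coeff_one, PowerSeries.coeff_X]
  | (n+2) =>
      rw [(seq_vanish n).2, map_add, PowerSeries.coeff_one, PowerSeries.coeff_X]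
      simp

end StmtAux

namespace StmtAux
open HahnSeries PowerSeries Finset

lemma E_psEval_Lps {t : HahnSeries ℝ ℝ} (ht : 0 < t.orderTop) :
    E (psEval t ht Lps) = 1 + t := by
  set s := psEval t ht Lps with hsdef
  have hs : 0 < s.orderTop := orderTop_psEval_pos ht constantCoeff_Lps
  have hEs : E s = (expFamily s hs).hsum := by rw [E, dif_pos hs]
  have key : E s = psEval t ht (PowerSeries.mk cSeq) := by
    ext γ
    set B := powBound t ht γ with hB
    have hble : ∀ m, (t ^ m).coeff γ ≠ 0 → m ≤ B := fun m hm => le_powBound ht hm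
    have hsn : ∀ n : ℕ, (s ^ n).coeff γ
        = ∑ m ∈ Finset.range (B+1), PowerSeries.coeff m (Lps ^ n) * (t ^ m).coeff γ := by
      intro n
      rw [hsdef, ← psEval_pow ht Lps n]
      exact psEval_coeff_eq_sum ht _
        (fun m hm => Finset.mem_range.mpr (lt_of_le_of_lt (hble m hm) (by omega)))
    have hvanish : ∀ n, B < n → (s ^ n).coeff γ = 0 := by
      intro n hn
      rw [hsn]
      refine Finset.sum_eq_zero fun m hm => ?_
      have hmB : m < B + 1 := Finset.mem_range.mp hm
      rw [coeff_Lps_pow_eq_zero (by omega), zero_mul]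
    have hLHS : (E s).coeff γ = ∑ n ∈ Finset.range (B+1),
        ((n.factorial : ℝ))⁻¹ * (s ^ n).coeff γ := by
      rw [hEs, SummableFamily.coeff_hsum_eq_sum_of_subset (t := Finset.range (B+1))]
      · refine Finset.sum_congr rfl fun n _ => ?_
        show (((n.factorial : ℝ))⁻¹ • s ^ n).coeff γ = _
        rw [HahnSeries.coeff_smul, smul_eq_mul]
      · intro n hn
        simp only [Set.mem_setOf_eq] at hn
        have hne : (s ^ n).coeff γ ≠ 0 := by
          intro h
          apply hn
          show (((n.factorial : ℝ))⁻¹ • s ^ n).coeff γ = 0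
          rw [HahnSeries.coeff_smul, h, smul_zero]
        refine Finset.mem_range.mpr ?_
        by_contra hlt
        exact hne (hvanish n (by omega))
    have hRHS : (psEval t ht (PowerSeries.mk cSeq)).coeff γ
        = ∑ m ∈ Finset.range (B+1), cSeq m * (t ^ m).coeff γ := by
      rw [psEval_coeff_eq_sum ht _ (P := Finset.range (B+1))
        (fun m hm => Finset.mem_range.mpr (lt_of_le_of_lt (hble m hm) (by omega)))]
      exact Finset.sum_congr rfl fun m _ => by rw [PowerSeries.coeff_mk]
    rw [hLHS, hRHS]
    have hswap : ∑ n ∈ Finset.range (B+1), ((n.factorial : ℝ))⁻¹ * (s ^ n).coeff γ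
        = ∑ m ∈ Finset.range (B+1),
            (∑ n ∈ Finset.range (B+1), ((n.factorial : ℝ))⁻¹ * PowerSeries.coeff m (Lps ^ n))
              * (t ^ m).coeff γ := by
      rw [Finset.sum_congr rfl (fun n _ => by rw [hsn n, Finset.mul_sum])]
      rw [Finset.sum_comm]
      refine Finset.sum_congr rfl fun m _ => ?_
      rw [Finset.sum_mul]
      exact Finset.sum_congr rfl fun n _ => by ring
    rw [hswap]
    refine Finset.sum_congr rfl fun m hm => ?_
    have hmB : m ≤ B := by have := Finset.mem_range.mp hm; omega
    congr 1
    rw [cSeq]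
    refine (Finset.sum_subset (fun x hx => Finset.mem_range.mpr
      (by have := Finset.mem_range.mp hx; omega)) fun n hn hnot => ?_).symm
    have : m < n := by
      have h2 : ¬ n < m + 1 := fun h => hnot (Finset.mem_range.mpr h)
      omega
    rw [coeff_Lps_pow_eq_zero this, mul_zero]
  rw [key]
  have hck : PowerSeries.mk cSeq = 1 + X := by
    ext m
    rw [PowerSeries.coeff_mk, cSeq_eq]
  rw [hck, psEval_add, psEval_one, psEval_X]

end StmtAux

namespace StmtAux
open HahnSeries PowerSeries Finset

lemma leadingCoeff_mul' {x y : HahnSeries ℝ ℝ} (hx : x ≠ 0) (hy : y ≠ 0) :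
    (x * y).leadingCoeff = x.leadingCoeff * y.leadingCoeff := by
  rw [leadingCoeff_eq, HahnSeries.order_mul hx hy, HahnSeries.coeff_mul_order_add_order]

lemma exists_expO {u : HahnSeries ℝ ℝ} (hu : memUplus u) :
    ∃ w, 0 ≤ w.orderTop ∧ expO w = u := by
  obtain ⟨hne, hord, hlc⟩ := hu
  have hc0 : u.coeff 0 = u.leadingCoeff := by rw [leadingCoeff_eq, hord]
  have hc : 0 < u.coeff 0 := by rw [hc0]; exact hlc
  set c := u.coeff 0 with hcdef
  set t := c⁻¹ • u - 1 with htdef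
  have ht : 0 < t.orderTop := by
    refine orderTop_pos_of_coeff fun g hg => ?_
    rw [htdef, HahnSeries.coeff_sub, HahnSeries.coeff_smul]
    rcases eq_or_lt_of_le hg with rfl | hlt
    · rw [← hcdef]
      simp [smul_eq_mul, inv_mul_cancel₀ hc.ne']
    · rw [coeff_eq_zero_of_lt_order (by rw [hord]; exact hlt), smul_zero,
        HahnSeries.coeff_one, if_neg hlt.ne, sub_zero]
  set s := psEval t ht Lps with hsdef
  have hs : 0 < s.orderTop := orderTop_psEval_pos ht constantCoeff_Lps
  refine ⟨HahnSeries.single (0:ℝ) (Real.log c) + s, ?_, ?_⟩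
  · refine orderTop_nonneg_of_coeff fun g hg => ?_
    rw [HahnSeries.coeff_add, HahnSeries.coeff_single_of_ne hg.ne,
      coeff_eq_zero_of_orderTop_pos hs hg.le, add_zero]
  · have hw0 : (HahnSeries.single (0:ℝ) (Real.log c) + s).coeff 0 = Real.log c := by
      rw [HahnSeries.coeff_add, HahnSeries.coeff_single_same,
        coeff_eq_zero_of_orderTop_pos hs le_rfl, add_zero]
    rw [expO, hw0, add_sub_cancel_left, hsdef, E_psEval_Lps ht, Real.exp_log hc,
      HahnSeries.single_zero_mul_eq_smul]
    have h1t : (1 : HahnSeries ℝ ℝ) + t = c⁻¹ • u := by rw [htdef]; ring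
    rw [h1t, smul_smul, mul_inv_cancel₀ hc.ne', one_smul]

lemma logO_mem {u : HahnSeries ℝ ℝ} (hu : memUplus u) :
    0 ≤ (logO u).orderTop ∧ expO (logO u) = u := by
  obtain ⟨w, hw, hwu⟩ := exists_expO hu
  have hex : ∃ a ∈ {a : HahnSeries ℝ ℝ | 0 ≤ a.orderTop}, expO a = u := ⟨w, hw, hwu⟩
  exact ⟨Function.invFunOn_mem hex, Function.invFunOn_eq hex⟩

end StmtAux

open StmtAux

theorem stmt_14 (a : HahnSeries ℝ ℝ) (ha : a ≠ 0) (hla : 0 < a.leadingCoeff)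
    (ha1 : a ≠ 1) :
    (∀ γ γ' : ℝ, tp a (γ + γ') = tp a γ * tp a γ') ∧
    (∀ γ γ' : ℝ, tp a γ = tp a γ' → γ = γ') := by
  classical
  have hvv : vv a = Real.exp (-a.order) := by rw [vv, Real.sign_of_pos hla, one_mul]
  have hv_pos : 0 < vv a := by rw [hvv]; exact Real.exp_pos _
  have hdiag_mul : ∀ r r' : ℝ, 0 < r → 0 < r' → diagPi (r * r') = diagPi r * diagPi r' := by
    intro r r' hr hr'
    rw [diagPi, diagPi, diagPi, HahnSeries.single_mul_single, abs_mul,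
      Real.log_mul (abs_ne_zero.mpr hr.ne') (abs_ne_zero.mpr hr'.ne'), neg_add]
  set u := a / diagPi (vv a) with hudef
  have hdv : diagPi (vv a) = HahnSeries.single a.order (Real.exp (-a.order)) := by
    rw [diagPi, hvv, abs_of_pos (Real.exp_pos _), Real.log_exp, neg_neg]
  have hinv : (diagPi (vv a))⁻¹ = HahnSeries.single (-a.order) (Real.exp a.order) := by
    refine inv_eq_of_mul_eq_one_right ?_
    rw [hdv, HahnSeries.single_mul_single, add_neg_cancel, ← Real.exp_add, neg_add_cancel,
      Real.exp_zero, HahnSeries.single_zero_one]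
  have humul : u = a * HahnSeries.single (-a.order) (Real.exp a.order) := by
    rw [hudef, div_eq_mul_inv, hinv]
  have hsne : (HahnSeries.single (-a.order) (Real.exp a.order) : HahnSeries ℝ ℝ) ≠ 0 :=
    HahnSeries.single_ne_zero (Real.exp_pos _).ne'
  have hu : memUplus u := by
    rw [humul]
    refine ⟨mul_ne_zero ha hsne, ?_, ?_⟩
    · rw [HahnSeries.order_mul_of_ne_zero (mul_ne_zero (leadingCoeff_ne_zero.mpr ha) (leadingCoeff_ne_zero.mpr hsne)), HahnSeries.order_single (Real.exp_pos _).ne',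
        add_neg_cancel]
    · rw [leadingCoeff_mul' ha hsne, HahnSeries.leadingCoeff_of_single]
      exact mul_pos hla (Real.exp_pos _)
  obtain ⟨hlmem, hlexp⟩ := logO_mem hu
  set l := logO u with hldef
  have hpow_eq : ∀ γ : ℝ, hpow u (HahnSeries.single (0:ℝ) γ) = expO (γ • l) := by
    intro γ
    rw [hpow, HahnSeries.single_zero_mul_eq_smul]
  constructor
  · intro γ γ'
    rw [tp, tp, tp, ← hudef, Real.rpow_add hv_pos,
      hdiag_mul _ _ (Real.rpow_pos_of_pos hv_pos γ) (Real.rpow_pos_of_pos hv_pos γ'),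
      hpow_eq, hpow_eq, hpow_eq, expO_smul_add hlmem]
    ring
  · intro γ γ' h
    by_cases ho : a.order = 0
    · have hv1 : vv a = 1 := by rw [hvv, ho, neg_zero, Real.exp_zero]
      have hd1 : diagPi (vv a) = 1 := by
        rw [hdv, ho, neg_zero, Real.exp_zero, HahnSeries.single_zero_one]
      have htp : ∀ δ : ℝ, tp a δ = expO (δ • l) := by
        intro δ
        rw [tp, ← hudef, hv1, Real.one_rpow, hpow_eq]
        rw [hv1] at hd1
        rw [hd1, one_mul]
      rw [htp, htp] at h
      have hsm := expO_inj (orderTop_smul_nonneg hlmem γ) (orderTop_smul_nonneg hlmem γ') h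
      have hlne : l ≠ 0 := by
        intro h0
        apply ha1
        have hua : u = a := by rw [hudef, hd1, div_one]
        rw [← hua, ← hlexp, h0, expO_zero]
      by_contra hne
      apply hlne
      ext g
      have hco := congrArg (fun x => HahnSeries.coeff x g) hsm
      simp only [HahnSeries.coeff_smul, smul_eq_mul] at hco
      have h2 : (γ - γ') * l.coeff g = 0 := by rw [sub_mul, hco, sub_self]
      have h3 := (mul_eq_zero.mp h2).resolve_left (sub_ne_zero.mpr hne)
      rw [HahnSeries.coeff_zero]
      exact h3
    · have hmem : ∀ δ : ℝ, memUplus (expO (δ • l)) :=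
        fun δ => memUplus_expO (orderTop_smul_nonneg hlmem δ)
      have hdne : ∀ δ : ℝ, diagPi ((vv a) ^ δ) ≠ 0 := by
        intro δ
        rw [diagPi]
        exact HahnSeries.single_ne_zero (Real.rpow_pos_of_pos hv_pos δ).ne'
      have hords : ∀ δ : ℝ, (diagPi ((vv a) ^ δ)).order = δ * a.order := by
        intro δ
        rw [diagPi, HahnSeries.order_single (Real.rpow_pos_of_pos hv_pos δ).ne',
          abs_of_pos (Real.rpow_pos_of_pos hv_pos δ), Real.log_rpow hv_pos, hvv, Real.log_exp]
        ring
      have horder : ∀ δ : ℝ, (tp a δ).order = δ * a.order := by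
        intro δ
        rw [tp, ← hudef, hpow_eq, HahnSeries.order_mul (hdne δ) (hmem δ).1, hords,
          (hmem δ).2.1, add_zero]
      have := congrArg HahnSeries.order h
      rw [horder, horder] at this
      exact mul_right_cancel₀ ho this
end
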